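/- arXiv:1007.1694 — 2 statements merged into one kernel-verified Lean document; each statement's English description precedes it below -/
import Mathlib

section
/- Let Γ be a consistent counter machine with m states, let (y,z) be a Skorokhod solution of the associated problem with z(0) = z^{i⁰,C⁰₁,C⁰₂}, let t ∈ ℕ, and suppose z(5t) = z^{i,C₁,C₂} where (i,C₁,C₂) is the configuration of the trajectory at time t, and let (i′,Δ₁,Δ₂) = Γ(i, 1{C₁>0}, 1{C₂>0}). Then on the interval (5t+4, 5t+5) the coordinate y_{A,5} is active at unit rate and all other y-coordinates are passive, and z(5t+5) = z^{i′, C₁+Δ₁, C₂+Δ₂}, the encoding of the configuration of the trajectory at time t+1. -/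
open scoped BigOperators

/-- A Skorokhod solution for the matrix `R` and input path `x`:
continuous `y, z` on `[0,∞)` with `z = x + R y`, `z ≥ 0`, `y 0 = 0`,
each `y j` nondecreasing, and `y j` does not increase while `z j > 0`
(the Lebesgue–Stieltjes measure of `y j` vanishes on `{s | z s j > 0}`). -/
def IsSkorokhodSolution {n : Type*} [Fintype n] (R : Matrix n n ℝ)
    (x y z : ℝ → n → ℝ) : Prop :=
  ContinuousOn y (Set.Ici 0) ∧
  ContinuousOn z (Set.Ici 0) ∧
  (∀ t : ℝ, 0 ≤ t → z t = x t + R.mulVec (y t)) ∧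
  (∀ t : ℝ, 0 ≤ t → ∀ j, 0 ≤ z t j) ∧
  (y 0 = 0) ∧
  (∀ j, MonotoneOn (fun t => y t j) (Set.Ici 0)) ∧
  (∀ j, ∀ s₁ s₂ : ℝ, 0 ≤ s₁ → s₁ ≤ s₂ →
      (∀ s ∈ Set.Ioo s₁ s₂, 0 < z s j) → y s₂ j = y s₁ j)

/-- `R` is an S-matrix: some nonnegative `w` with `R w > 0` componentwise. -/
def IsSMatrix {n : Type*} [Fintype n] (R : Matrix n n ℝ) : Prop :=
  ∃ w : n → ℝ, (∀ i, 0 ≤ w i) ∧ (∀ i, 0 < R.mulVec w i)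

/-- `R` is completely-S: every (nonempty) principal submatrix is an S-matrix. -/
def IsCompletelyS {n : Type*} [Fintype n] [DecidableEq n] (R : Matrix n n ℝ) : Prop :=
  ∀ I : Finset n, I.Nonempty →
    IsSMatrix (R.submatrix (fun a : I => (a : n)) (fun a : I => (a : n)))

/-- Stability of the fluid model `(z₀, θ, R)`: every Skorokhod solution for
`x t = z₀ + θ t` satisfies `z t → 0` as `t → ∞`. -/
def FluidStable {n : Type*} [Fintype n] (z0 θv : n → ℝ) (R : Matrix n n ℝ) : Prop :=
  ∀ y z : ℝ → n → ℝ,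
    IsSkorokhodSolution R (fun t i => z0 i + θv i * t) y z →
    Filter.Tendsto z Filter.atTop (nhds 0)

/-- `f` is active at rate `r` on `(s₁, s₂)`. -/
def ActiveAtRate (f : ℝ → ℝ) (r s₁ s₂ : ℝ) : Prop :=
  ∀ s ∈ Set.Ioo s₁ s₂, f s - f s₁ = r * (s - s₁)

/-- `f` is active at unit rate on `(s₁, s₂)`. -/
def UnitActive (f : ℝ → ℝ) (s₁ s₂ : ℝ) : Prop := ActiveAtRate f 1 s₁ s₂

/-- `f` is passive (constant) on `(s₁, s₂)`. -/
def Passive (f : ℝ → ℝ) (s₁ s₂ : ℝ) : Prop := ∀ s ∈ Set.Ioo s₁ s₂, f s = f s₁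

/-- A counter machine with `m` states: update map with moves in
`{(-1,0),(0,-1),(0,0),(1,0),(0,1)}`, never decrementing a zero counter. -/
structure CounterMachine (m : ℕ) where
  Γ : Fin m → Bool → Bool → Fin m × ℤ × ℤ
  moves : ∀ i b c, ((Γ i b c).2.1, (Γ i b c).2.2) ∈
      ({(-1,0), (0,-1), (0,0), (1,0), (0,1)} : Set (ℤ × ℤ))
  consistent : ∀ i b c, (b = false → 0 ≤ (Γ i b c).2.1) ∧ (c = false → 0 ≤ (Γ i b c).2.2)

/-- One step of the counter machine on a configuration. -/
def CounterMachine.step {m : ℕ} (M : CounterMachine m) :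
    Fin m × ℕ × ℕ → Fin m × ℕ × ℕ := fun cfg =>
  let r := M.Γ cfg.1 (decide (0 < cfg.2.1)) (decide (0 < cfg.2.2))
  (r.1, ((cfg.2.1 : ℤ) + r.2.1).toNat, ((cfg.2.2 : ℤ) + r.2.2).toNat)

/-- Index set of the associated Skorokhod problem: groups A (5), B (m), C (2),
D (2), E (4m), F (4m); total dimension 5m + 9. -/
inductive Idx (m : ℕ) where
  | A : Fin 5 → Idx m
  | B : Fin m → Idx m
  | C : Fin 2 → Idx m
  | D : Fin 2 → Idx m
  | E : Fin m → Bool → Bool → Idx m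
  | F : Fin m → Bool → Bool → Idx m
  deriving DecidableEq, Fintype

/-- Numeric value of a bit. -/
def bnum (b : Bool) : ℝ := if b then 1 else 0

/-- Real indicator of a decidable proposition. -/
def indC (P : Prop) [Decidable P] : ℝ := if P then 1 else 0

/-- The 5×5 block AA. -/
def AAmat : Matrix (Fin 5) (Fin 5) ℝ :=
  !![1,2,1,1,0; 0,1,2,1,1; 1,0,1,2,1; 1,1,0,1,2; 2,1,1,0,1]

/-- The reflection matrix `R` associated with the counter machine `M`. -/
def Rmat {m : ℕ} (M : CounterMachine m) : Matrix (Idx m) (Idx m) ℝ :=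
  fun p q => match p, q with
  | .A k, .A l => AAmat k l
  | .B _, .A l => if l = 0 then -1 else 0
  | .B j, .B j' => if j' = j then 1 else 0
  | .B j, .E i b c => if (M.Γ i b c).1 = j then 0 else 1
  | .C _, .A l => if l = 0 ∨ l = 3 then -1 else 0
  | .C k, .C k' => if k' = k then 1 else 0
  | .C k, .D k' => if k' = k then 1 else 0
  | .C k, .E i b c =>
      (if k = 0 then ((M.Γ i b c).2.1 : ℝ) else ((M.Γ i b c).2.2 : ℝ)) + 1
  | .D _, .A l => if l = 1 then -1 else 0
  | .D k, .C k' => if k' = k then 1 else 0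
  | .D k, .D k' => if k' = k then 1 else 0
  | .E _ b c, .A l => if l = 0 then -(bnum b) - bnum c else if l = 2 then -1 else 0
  | .E i _ _, .B j => if j = i then -1 else 0
  | .E _ b c, .C k => if k = 0 then 2 * bnum b - 1 else 2 * bnum c - 1
  | .E i b c, .E i' b' c' => if i' = i ∧ b' = b ∧ c' = c then 1 else 0
  | .E i b c, .F i' b' c' => if i' = i ∧ b' = b ∧ c' = c then 1 else 0
  | .F _ b c, .A l => if l = 0 then -(bnum b) - bnum c
      else if l = 2 then -1 else if l = 3 then -4 else if l = 4 then 4 else 0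
  | .F i _ _, .B j => if j = i then -1 else 0
  | .F _ b c, .C k => if k = 0 then 2 * bnum b - 1 else 2 * bnum c - 1
  | .F i b c, .E i' b' c' => if i' = i ∧ b' = b ∧ c' = c then 1 else 0
  | .F i b c, .F i' b' c' => if i' = i ∧ b' = b ∧ c' = c then 1 else 0
  | _, _ => 0

/-- The modified reflection matrix `R*` with halting state `i*`. -/
def RmatStar {m : ℕ} (M : CounterMachine m) (istar : Fin m) :
    Matrix (Idx m) (Idx m) ℝ :=
  fun p q => match p, q with
  | .A k, .B j => if j = istar ∧ (k = 2 ∨ k = 3 ∨ k = 4) then -1 else 0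
  | .E i b c, .B j =>
      if j = istar then -3 + bnum b + bnum c else if j = i then -1 else 0
  | .F i b c, .B j =>
      if j = istar then -4 + bnum b + bnum c else if j = i then -1 else 0
  | p, q => Rmat M p q

/-- The drift vector θ: −1 on the A-coordinates and 0 elsewhere. -/
def thetaVec (m : ℕ) : Idx m → ℝ := fun p => match p with
  | .A _ => -1
  | _ => 0

/-- The encoding `z^{i,C₁,C₂}` of a configuration as a state of the
Skorokhod problem. -/
def encCfg {m : ℕ} (i : Fin m) (C₁ C₂ : ℕ) : Idx m → ℝ := fun p => match p with
  | .A k => if k = 0 ∨ k = 4 then 0 else 1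
  | .B j => if j = i then 0 else 1
  | .C k => if k = 0 then (C₁ : ℝ) else (C₂ : ℝ)
  | .D _ => 0
  | .E _ _ _ => 3
  | .F _ _ _ => 4

/-- The linear input path `x t = z^{i,C₁,C₂} + θ t`. -/
def fluidX {m : ℕ} (i : Fin m) (C₁ C₂ : ℕ) : ℝ → Idx m → ℝ :=
  fun t p => encCfg i C₁ C₂ p + thetaVec m p * t

/-- The quantity Υ(i′,b,c) of the paper (for current configuration (i,C₁,C₂)). -/
def Upsilon {m : ℕ} (i : Fin m) (C₁ C₂ : ℕ) (i' : Fin m) (b c : Bool) : ℝ :=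
  -(bnum b) - bnum c + (2 * bnum b - 1) * indC (C₁ = 0)
    + (2 * bnum c - 1) * indC (C₂ = 0) - indC (i' = i)


section Infra

open Set

variable {n : Type*} [Fintype n] {R : Matrix n n ℝ} {x y z : ℝ → n → ℝ}

lemma sk_mono (h : IsSkorokhodSolution R x y z) {T s : ℝ} (hT : 0 ≤ T) (hs : T ≤ s)
    (j : n) : 0 ≤ y s j - y T j :=
  sub_nonneg.2 <| h.2.2.2.2.2.1 j (mem_Ici.2 hT) (mem_Ici.2 (hT.trans hs)) hs

lemma sk_frozen_of_pos (h : IsSkorokhodSolution R x y z) {T S : ℝ} (hT : 0 ≤ T)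
    (j : n) (hpos : ∀ u ∈ Ioo T S, 0 < z u j) :
    ∀ s ∈ Icc T S, y s j - y T j = 0 := by
  intro s hs
  have := h.2.2.2.2.2.2 j T s hT hs.1 (fun u hu => hpos u ⟨hu.1, lt_of_lt_of_le hu.2 hs.2⟩)
  simpa [sub_eq_zero] using this

/-- Key upper-bound lemma: if `y j` can only be at most `g` whenever `z j = 0`,
then `y j - y T ≤ g` throughout. -/
lemma sk_upper (h : IsSkorokhodSolution R x y z) {T S : ℝ} (hT : 0 ≤ T)
    (j : n) (g : ℝ → ℝ) (hgc : ContinuousOn g (Icc T S))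
    (hgm : MonotoneOn g (Icc T S)) (hg0 : 0 ≤ g T)
    (hkey : ∀ s ∈ Icc T S, z s j = 0 → y s j - y T j ≤ g s) :
    ∀ s ∈ Icc T S, y s j - y T j ≤ g s := by
  intro s₂ hs₂
  by_contra hlt
  push_neg at hlt
  have hIcc : Icc T s₂ ⊆ Icc T S := Icc_subset_Icc le_rfl hs₂.2
  have hIci : Icc T s₂ ⊆ Ici (0:ℝ) := fun u hu => le_trans hT hu.1
  have hycont : ContinuousOn (fun s => y s j - y T j - g s) (Icc T s₂) :=
    (((continuous_apply j).comp_continuousOn (h.1.mono hIci)).sub continuousOn_const).sub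
      (hgc.mono hIcc)
  set K : Set ℝ := Icc T s₂ ∩ (fun s => y s j - y T j - g s) ⁻¹' Iic 0 with hKdef
  have hKclosed : IsClosed K :=
    hycont.preimage_isClosed_of_isClosed isClosed_Icc isClosed_Iic
  have hTK : T ∈ K := by
    refine ⟨⟨le_rfl, hs₂.1⟩, ?_⟩
    simp only [mem_preimage, mem_Iic]
    linarith
  have hKne : K.Nonempty := ⟨T, hTK⟩
  have hKbdd : BddAbove K := ⟨s₂, fun u hu => hu.1.2⟩
  set s₁ : ℝ := sSup K with hs₁def
  have hs₁K : s₁ ∈ K := hKclosed.csSup_mem hKne hKbdd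
  have hs₁le : s₁ ≤ s₂ := csSup_le hKne (fun u hu => hu.1.2)
  have hs₁mem : s₁ ∈ Icc T s₂ := hs₁K.1
  have hs₁lt : s₁ < s₂ := by
    rcases lt_or_eq_of_le hs₁le with hlt' | heq
    · exact hlt'
    · exfalso
      have : y s₂ j - y T j - g s₂ ≤ 0 := by
        have := hs₁K.2; rw [heq] at this; exact this
      linarith
  have hpos : ∀ u ∈ Ioo s₁ s₂, 0 < z u j := by
    intro u hu
    have huI : u ∈ Icc T s₂ := ⟨le_trans hs₁mem.1 hu.1.le, hu.2.le⟩
    have hunK : u ∉ K := fun huK => absurd (le_csSup hKbdd huK) (not_le.2 hu.1)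
    have hne : ¬ (y u j - y T j - g u ≤ 0) := fun hle => hunK ⟨huI, hle⟩
    push_neg at hne
    rcases lt_or_eq_of_le (h.2.2.2.1 u (le_trans hT huI.1) j) with hpos' | heq
    · exact hpos'
    · exfalso
      have := hkey u (hIcc huI) heq.symm
      linarith
  have heq2 : y s₂ j = y s₁ j :=
    h.2.2.2.2.2.2 j s₁ s₂ (le_trans hT hs₁mem.1) hs₁le hpos
  have hgmono : g s₁ ≤ g s₂ := hgm (hIcc hs₁mem) hs₂ hs₁le
  have h1 : y s₁ j - y T j - g s₁ ≤ 0 := hs₁K.2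
  have hmono2 : 0 ≤ y s₁ j - y T j := sk_mono h hT hs₁mem.1 j
  rw [heq2] at hlt
  linarith

/-- Specialization: passivity (g = 0). -/
lemma sk_passive (h : IsSkorokhodSolution R x y z) {T S : ℝ} (hT : 0 ≤ T)
    (j : n)
    (hkey : ∀ s ∈ Icc T S, z s j = 0 → y s j - y T j ≤ 0) :
    ∀ s ∈ Icc T S, y s j - y T j = 0 := by
  intro s hs
  have : y s j - y T j ≤ 0 := sk_upper h hT j (fun _ => 0) continuousOn_const
    (fun _ _ _ _ _ => le_rfl) le_rfl hkey s hs
  have h2 := sk_mono h hT hs.1 j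
  linarith

/-- Specialization: linear upper bound `r * (s - T)`. -/
lemma sk_upper_lin (h : IsSkorokhodSolution R x y z) {T S : ℝ} (hT : 0 ≤ T)
    (j : n) (r : ℝ) (hr : 0 ≤ r)
    (hkey : ∀ s ∈ Icc T S, z s j = 0 → y s j - y T j ≤ r * (s - T)) :
    ∀ s ∈ Icc T S, y s j - y T j ≤ r * (s - T) := by
  refine sk_upper h hT j (fun s => r * (s - T)) ?_ ?_ (by simp) hkey
  · exact (continuousOn_const.mul (continuousOn_id.sub continuousOn_const))
  · intro a _ b _ hab
    have : a - T ≤ b - T := by linarith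
    exact mul_le_mul_of_nonneg_left this hr

end Infra

section Rows

open Set Finset

variable {m : ℕ}

/-- Equivalence of the index set with a sum type, for summation. -/
def idxEquiv (m : ℕ) : Idx m ≃
    (Fin 5 ⊕ Fin m ⊕ Fin 2 ⊕ Fin 2 ⊕ (Fin m × Bool × Bool) ⊕ (Fin m × Bool × Bool)) where
  toFun p := match p with
    | .A k => Sum.inl k
    | .B j => Sum.inr (Sum.inl j)
    | .C k => Sum.inr (Sum.inr (Sum.inl k))
    | .D k => Sum.inr (Sum.inr (Sum.inr (Sum.inl k)))
    | .E i b c => Sum.inr (Sum.inr (Sum.inr (Sum.inr (Sum.inl (i, b, c)))))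
    | .F i b c => Sum.inr (Sum.inr (Sum.inr (Sum.inr (Sum.inr (i, b, c)))))
  invFun q := match q with
    | Sum.inl k => .A k
    | Sum.inr (Sum.inl j) => .B j
    | Sum.inr (Sum.inr (Sum.inl k)) => .C k
    | Sum.inr (Sum.inr (Sum.inr (Sum.inl k))) => .D k
    | Sum.inr (Sum.inr (Sum.inr (Sum.inr (Sum.inl (i, b, c))))) => .E i b c
    | Sum.inr (Sum.inr (Sum.inr (Sum.inr (Sum.inr (i, b, c))))) => .F i b c
  left_inv p := by cases p <;> rfl
  right_inv q := by
    rcases q with k | j | k | k | ⟨i, b, c⟩ | ⟨i, b, c⟩ <;> rfl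

lemma sum_idx (f : Idx m → ℝ) :
    (∑ p : Idx m, f p) = (∑ k : Fin 5, f (.A k)) + (∑ j : Fin m, f (.B j))
      + (∑ k : Fin 2, f (.C k)) + (∑ k : Fin 2, f (.D k))
      + (∑ i : Fin m, ∑ b : Bool, ∑ c : Bool, f (.E i b c))
      + (∑ i : Fin m, ∑ b : Bool, ∑ c : Bool, f (.F i b c)) := by
  rw [← Equiv.sum_comp (idxEquiv m).symm f]
  simp [Fintype.sum_sum_type, Fintype.sum_prod_type, idxEquiv, add_assoc]

lemma mulVec_A (M : CounterMachine m) (v : Idx m → ℝ) (k : Fin 5) :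
    (Rmat M).mulVec v (.A k) = ∑ l : Fin 5, AAmat k l * v (.A l) := by
  rw [Matrix.mulVec, dotProduct, sum_idx]
  simp [Rmat]

lemma mulVec_B (M : CounterMachine m) (v : Idx m → ℝ) (j : Fin m) :
    (Rmat M).mulVec v (.B j) = -(v (.A 0)) + v (.B j)
      + ∑ i : Fin m, ∑ b : Bool, ∑ c : Bool,
          (if (M.Γ i b c).1 = j then 0 else 1) * v (.E i b c) := by
  rw [Matrix.mulVec, dotProduct, sum_idx]
  simp [Rmat, Fin.sum_univ_five, Finset.sum_ite_eq]
  try ring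

lemma mulVec_C (M : CounterMachine m) (v : Idx m → ℝ) (k : Fin 2) :
    (Rmat M).mulVec v (.C k) = -(v (.A 0)) - v (.A 3) + v (.C k) + v (.D k)
      + ∑ i : Fin m, ∑ b : Bool, ∑ c : Bool,
          ((if k = 0 then ((M.Γ i b c).2.1 : ℝ) else ((M.Γ i b c).2.2 : ℝ)) + 1)
            * v (.E i b c) := by
  rw [Matrix.mulVec, dotProduct, sum_idx]
  fin_cases k <;> (simp [Rmat, Fin.sum_univ_five, Fin.sum_univ_two, Finset.sum_ite_eq]; try ring)

lemma mulVec_D (M : CounterMachine m) (v : Idx m → ℝ) (k : Fin 2) :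
    (Rmat M).mulVec v (.D k) = -(v (.A 1)) + v (.C k) + v (.D k) := by
  rw [Matrix.mulVec, dotProduct, sum_idx]
  fin_cases k <;> (simp [Rmat, Fin.sum_univ_five, Fin.sum_univ_two, Finset.sum_ite_eq]; try ring)

lemma tripleSum_diag (f : Fin m → Bool → Bool → ℝ) (i : Fin m) (b c : Bool) :
    (∑ i' : Fin m, ∑ b' : Bool, ∑ c' : Bool,
      (if i' = i ∧ b' = b ∧ c' = c then (1:ℝ) else 0) * f i' b' c') = f i b c := by
  rw [Finset.sum_eq_single i]
  · cases b <;> cases c <;> simp [Fintype.sum_bool]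
  · intro x _ hx
    cases b <;> cases c <;> simp [Fintype.sum_bool, hx]
  · simp

lemma mulVec_E (M : CounterMachine m) (v : Idx m → ℝ) (i : Fin m) (b c : Bool) :
    (Rmat M).mulVec v (.E i b c) = -((bnum b + bnum c) * v (.A 0)) - v (.A 2)
      - v (.B i) + (2 * bnum b - 1) * v (.C 0) + (2 * bnum c - 1) * v (.C 1)
      + v (.E i b c) + v (.F i b c) := by
  rw [Matrix.mulVec, dotProduct, sum_idx]
  have h1 : (∑ i' : Fin m, ∑ b' : Bool, ∑ c' : Bool,
      Rmat M (.E i b c) (.E i' b' c') * v (.E i' b' c')) = v (.E i b c) := by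
    simpa [Rmat] using tripleSum_diag (fun i' b' c' => v (.E i' b' c')) i b c
  have h2 : (∑ i' : Fin m, ∑ b' : Bool, ∑ c' : Bool,
      Rmat M (.E i b c) (.F i' b' c') * v (.F i' b' c')) = v (.F i b c) := by
    simpa [Rmat] using tripleSum_diag (fun i' b' c' => v (.F i' b' c')) i b c
  rw [h1, h2]
  simp [Rmat, Fin.sum_univ_five, Fin.sum_univ_two, Finset.sum_ite_eq]
  try ring

lemma mulVec_F (M : CounterMachine m) (v : Idx m → ℝ) (i : Fin m) (b c : Bool) :
    (Rmat M).mulVec v (.F i b c) = -((bnum b + bnum c) * v (.A 0)) - v (.A 2)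
      - 4 * v (.A 3) + 4 * v (.A 4)
      - v (.B i) + (2 * bnum b - 1) * v (.C 0) + (2 * bnum c - 1) * v (.C 1)
      + v (.E i b c) + v (.F i b c) := by
  rw [Matrix.mulVec, dotProduct, sum_idx]
  have h1 : (∑ i' : Fin m, ∑ b' : Bool, ∑ c' : Bool,
      Rmat M (.F i b c) (.E i' b' c') * v (.E i' b' c')) = v (.E i b c) := by
    simpa [Rmat] using tripleSum_diag (fun i' b' c' => v (.E i' b' c')) i b c
  have h2 : (∑ i' : Fin m, ∑ b' : Bool, ∑ c' : Bool,
      Rmat M (.F i b c) (.F i' b' c') * v (.F i' b' c')) = v (.F i b c) := by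
    simpa [Rmat] using tripleSum_diag (fun i' b' c' => v (.F i' b' c')) i b c
  rw [h1, h2]
  simp [Rmat, Fin.sum_univ_five, Fin.sum_univ_two, Finset.sum_ite_eq]
  try ring

end Rows

section PhaseDefs

open Set Finset

variable {m : ℕ}

/-- indicator that the bit `b` matches the positivity of counter `C`. -/
noncomputable def matR (C : ℕ) (b : Bool) : ℝ := if b = decide (0 < C) then 1 else 0

/-- number of matches of `(i'',b,c)` with the current configuration. -/
noncomputable def muR (i : Fin m) (C₁ C₂ : ℕ) (i'' : Fin m) (b c : Bool) : ℝ :=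
  (if i'' = i then 1 else 0) + matR C₁ b + matR C₂ c

noncomputable def mrR (C : ℕ) : ℝ := if 0 < C then 1 else 0

/-- new state. -/
def newI (M : CounterMachine m) (i : Fin m) (C₁ C₂ : ℕ) : Fin m :=
  (M.Γ i (decide (0 < C₁)) (decide (0 < C₂))).1

/-- counter increments (as integers). -/
def delZ (M : CounterMachine m) (i : Fin m) (C₁ C₂ : ℕ) (k : Fin 2) : ℤ :=
  if k = 0 then (M.Γ i (decide (0 < C₁)) (decide (0 < C₂))).2.1
  else (M.Γ i (decide (0 < C₁)) (decide (0 < C₂))).2.2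

noncomputable def ccR (C₁ C₂ : ℕ) (k : Fin 2) : ℝ := if k = 0 then C₁ else C₂
noncomputable def mmR (C₁ C₂ : ℕ) (k : Fin 2) : ℝ := if k = 0 then mrR C₁ else mrR C₂
noncomputable def ddR (M : CounterMachine m) (i : Fin m) (C₁ C₂ : ℕ) (k : Fin 2) : ℝ :=
  (delZ M i C₁ C₂ k : ℝ)

noncomputable def wR (i : Fin m) (C₁ C₂ : ℕ) (i'' : Fin m) (b c : Bool) : ℝ :=
  3 - muR i C₁ C₂ i'' b c +
    (if i'' = i ∧ b = decide (0 < C₁) ∧ c = decide (0 < C₂) then 1 else 0)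

/-- state vectors at the end of phases 0–3. -/
noncomputable def v1 (M : CounterMachine m) (i : Fin m) (C₁ C₂ : ℕ) : Idx m → ℝ
  | .A k => ![0,0,1,1,1] k
  | .B _ => 0
  | .C k => ccR C₁ C₂ k - mmR C₁ C₂ k
  | .D k => 1 - mmR C₁ C₂ k
  | .E i'' b c => 3 - muR i C₁ C₂ i'' b c
  | .F i'' b c => 4 - muR i C₁ C₂ i'' b c

noncomputable def v2 (M : CounterMachine m) (i : Fin m) (C₁ C₂ : ℕ) : Idx m → ℝ
  | .A k => ![1,0,0,1,1] k
  | .B _ => 0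
  | .C k => ccR C₁ C₂ k
  | .D _ => 0
  | .E i'' b c => 3 - muR i C₁ C₂ i'' b c
  | .F i'' b c => 4 - muR i C₁ C₂ i'' b c

noncomputable def v3 (M : CounterMachine m) (i : Fin m) (C₁ C₂ : ℕ) : Idx m → ℝ
  | .A k => ![1,1,0,0,1] k
  | .B j => if j = newI M i C₁ C₂ then 0 else 1
  | .C k => ccR C₁ C₂ k + ddR M i C₁ C₂ k + 1
  | .D _ => 0
  | .E i'' b c => wR i C₁ C₂ i'' b c - 1
  | .F i'' b c => wR i C₁ C₂ i'' b c

noncomputable def v4 (M : CounterMachine m) (i : Fin m) (C₁ C₂ : ℕ) : Idx m → ℝ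
  | .A k => ![1,1,1,0,0] k
  | .B j => if j = newI M i C₁ C₂ then 0 else 1
  | .C k => ccR C₁ C₂ k + ddR M i C₁ C₂ k
  | .D _ => 0
  | .E _ _ _ => 3
  | .F _ _ _ => 0

noncomputable def v5 (M : CounterMachine m) (i : Fin m) (C₁ C₂ : ℕ) : Idx m → ℝ
  | .A k => ![0,1,1,1,0] k
  | .B j => if j = newI M i C₁ C₂ then 0 else 1
  | .C k => ccR C₁ C₂ k + ddR M i C₁ C₂ k
  | .D _ => 0
  | .E _ _ _ => 3
  | .F _ _ _ => 4

lemma muR_nonneg (i : Fin m) (C₁ C₂ : ℕ) (i'' : Fin m) (b c : Bool) :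
    0 ≤ muR i C₁ C₂ i'' b c := by
  unfold muR matR; positivity

lemma muR_le_three (i : Fin m) (C₁ C₂ : ℕ) (i'' : Fin m) (b c : Bool) :
    muR i C₁ C₂ i'' b c ≤ 3 := by
  unfold muR matR
  split <;> split <;> split <;> norm_num

lemma muR_le_two_of_ne (i : Fin m) (C₁ C₂ : ℕ) (i'' : Fin m) (b c : Bool)
    (hne : ¬ (i'' = i ∧ b = decide (0 < C₁) ∧ c = decide (0 < C₂))) :
    muR i C₁ C₂ i'' b c ≤ 2 := by
  by_cases h1 : i'' = i <;> by_cases h2 : b = decide (0 < C₁) <;>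
    by_cases h3 : c = decide (0 < C₂)
  · exact absurd ⟨h1, h2, h3⟩ hne
  all_goals unfold muR matR
  all_goals simp [h1, h2, h3]
  all_goals norm_num

lemma muR_eq_three (i : Fin m) (C₁ C₂ : ℕ) :
    muR i C₁ C₂ i (decide (0 < C₁)) (decide (0 < C₂)) = 3 := by
  simp [muR, matR]; norm_num

lemma wR_ge_one (i : Fin m) (C₁ C₂ : ℕ) (i'' : Fin m) (b c : Bool) :
    1 ≤ wR i C₁ C₂ i'' b c := by
  unfold wR
  by_cases hm : i'' = i ∧ b = decide (0 < C₁) ∧ c = decide (0 < C₂)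
  · obtain ⟨h1, h2, h3⟩ := hm
    subst h1; subst h2; subst h3
    rw [muR_eq_three]; norm_num
  · have := muR_le_two_of_ne i C₁ C₂ i'' b c hm
    simp [hm]; linarith

lemma wR_le_three (i : Fin m) (C₁ C₂ : ℕ) (i'' : Fin m) (b c : Bool) :
    wR i C₁ C₂ i'' b c ≤ 3 := by
  unfold wR
  by_cases hm : i'' = i ∧ b = decide (0 < C₁) ∧ c = decide (0 < C₂)
  · obtain ⟨h1, h2, h3⟩ := hm
    subst h1; subst h2; subst h3
    rw [muR_eq_three]; norm_num
  · have := muR_nonneg i C₁ C₂ i'' b c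
    simp [hm]; linarith

lemma delZ_ge (M : CounterMachine m) (i : Fin m) (C₁ C₂ : ℕ) (k : Fin 2) :
    -1 ≤ delZ M i C₁ C₂ k := by
  have := M.moves i (decide (0 < C₁)) (decide (0 < C₂))
  simp only [Set.mem_insert_iff, Set.mem_singleton_iff] at this
  unfold delZ
  rcases this with h | h | h | h | h <;>
    fin_cases k <;> simp_all <;> omega

lemma delZ_le (M : CounterMachine m) (i : Fin m) (C₁ C₂ : ℕ) (k : Fin 2) :
    delZ M i C₁ C₂ k ≤ 1 := by
  have := M.moves i (decide (0 < C₁)) (decide (0 < C₂))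
  simp only [Set.mem_insert_iff, Set.mem_singleton_iff] at this
  unfold delZ
  rcases this with h | h | h | h | h <;>
    fin_cases k <;> simp_all <;> omega

lemma cc_dd_nonneg (M : CounterMachine m) (i : Fin m) (C₁ C₂ : ℕ) (k : Fin 2) :
    0 ≤ ccR C₁ C₂ k + ddR M i C₁ C₂ k := by
  have hge := delZ_ge M i C₁ C₂ k
  have hcons := M.consistent i (decide (0 < C₁)) (decide (0 < C₂))
  have key : ∀ (C : ℕ) (d : ℤ), -1 ≤ d → (C = 0 → 0 ≤ d) → 0 ≤ (C:ℝ) + (d:ℝ) := by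
    intro C d h1 h2
    by_cases hC : C = 0
    · have := h2 hC
      have h3 : (0:ℝ) ≤ (d:ℝ) := by exact_mod_cast this
      have h4 : (0:ℝ) ≤ (C:ℝ) := by positivity
      linarith
    · have hC1 : 1 ≤ C := Nat.one_le_iff_ne_zero.2 hC
      have h3 : (1:ℝ) ≤ (C:ℝ) := by exact_mod_cast hC1
      have h4 : (-1:ℝ) ≤ (d:ℝ) := by exact_mod_cast h1
      linarith
  unfold ccR ddR
  by_cases hk : k = 0
  · simp only [hk, if_pos rfl]
    refine key C₁ _ ?_ ?_
    · simpa [delZ, hk] using hge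
    · intro hC0
      have hb : decide (0 < C₁) = false := by simp [hC0]
      have := hcons.1 hb
      simpa [delZ]
  · simp only [hk, if_neg hk]
    refine key C₂ _ ?_ ?_
    · simpa [delZ, hk] using hge
    · intro hC0
      have hb : decide (0 < C₂) = false := by simp [hC0]
      have := hcons.2 hb
      simpa [delZ, hk]

lemma ddR_add_one_nonneg (M : CounterMachine m) (i : Fin m) (C₁ C₂ : ℕ) (k : Fin 2) :
    0 ≤ ddR M i C₁ C₂ k + 1 := by
  have := delZ_ge M i C₁ C₂ k
  unfold ddR
  have : (-1:ℝ) ≤ (delZ M i C₁ C₂ k : ℝ) := by exact_mod_cast this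
  linarith

end PhaseDefs

section ZIncr

open Set

variable {m : ℕ} {M : CounterMachine m} {i0 : Fin m} {C₁0 C₂0 : ℕ}
variable {y z : ℝ → Idx m → ℝ}

lemma z_incr (h : IsSkorokhodSolution (Rmat M) (fluidX i0 C₁0 C₂0) y z)
    {T s : ℝ} (hT : 0 ≤ T) (hs : T ≤ s) (j : Idx m) :
    z s j = z T j + thetaVec m j * (s - T)
      + (Rmat M).mulVec (fun q => y s q - y T q) j := by
  have h1 := congrFun (h.2.2.1 s (hT.trans hs)) j
  have h2 := congrFun (h.2.2.1 T hT) j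
  have h3 : (Rmat M).mulVec (fun q => y s q - y T q) j
      = (Rmat M).mulVec (y s) j - (Rmat M).mulVec (y T) j := by
    have : (fun q => y s q - y T q) = y s - y T := rfl
    rw [this, Matrix.mulVec_sub, Pi.sub_apply]
  rw [h3]
  simp only [fluidX, Pi.add_apply] at h1 h2
  rw [h1, h2]
  ring

end ZIncr

section Helpers

open Set Finset

variable {m : ℕ} {M : CounterMachine m} {i0 : Fin m} {C₁0 C₂0 : ℕ}
variable {y z : ℝ → Idx m → ℝ}

lemma AA_nonneg : ∀ k l : Fin 5, 0 ≤ AAmat k l := by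
  intro k l; fin_cases k <;> fin_cases l <;> norm_num [AAmat]

lemma moves_ge1 (M : CounterMachine m) (i : Fin m) (b c : Bool) :
    (-1:ℝ) ≤ ((M.Γ i b c).2.1 : ℝ) := by
  have := M.moves i b c
  simp only [Set.mem_insert_iff, Set.mem_singleton_iff] at this
  rcases this with h | h | h | h | h <;>
    · have h1 := congrArg Prod.fst h
      simp at h1
      rw [h1]; norm_num

lemma moves_ge2 (M : CounterMachine m) (i : Fin m) (b c : Bool) :
    (-1:ℝ) ≤ ((M.Γ i b c).2.2 : ℝ) := by
  have := M.moves i b c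
  simp only [Set.mem_insert_iff, Set.mem_singleton_iff] at this
  rcases this with h | h | h | h | h <;>
    · have h1 := congrArg Prod.snd h
      simp at h1
      rw [h1]; norm_num

lemma CEcoef_nonneg (M : CounterMachine m) (k : Fin 2) (i : Fin m) (b c : Bool) :
    0 ≤ (if k = 0 then ((M.Γ i b c).2.1 : ℝ) else ((M.Γ i b c).2.2 : ℝ)) + 1 := by
  have h1 := moves_ge1 M i b c
  have h2 := moves_ge2 M i b c
  split <;> linarith

lemma tripleSum_nonneg {f : Fin m → Bool → Bool → ℝ} (hf : ∀ i b c, 0 ≤ f i b c) :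
    0 ≤ ∑ i : Fin m, ∑ b : Bool, ∑ c : Bool, f i b c :=
  Finset.sum_nonneg fun _ _ => Finset.sum_nonneg fun _ _ =>
    Finset.sum_nonneg fun _ _ => hf _ _ _

lemma tripleSum_zero {f g : Fin m → Bool → Bool → ℝ} (hg : ∀ i b c, g i b c = 0) :
    (∑ i : Fin m, ∑ b : Bool, ∑ c : Bool, f i b c * g i b c) = 0 := by
  have : ∀ i b c, f i b c * g i b c = 0 := fun i b c => by rw [hg]; ring
  simp only [this, Finset.sum_const_zero]

lemma tripleSum_single (f : Fin m → Bool → Bool → ℝ) (r : ℝ) (i : Fin m) (b c : Bool) :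
    (∑ i' : Fin m, ∑ b' : Bool, ∑ c' : Bool,
      f i' b' c' * (if i' = i ∧ b' = b ∧ c' = c then r else 0)) = f i b c * r := by
  rw [Finset.sum_eq_single i]
  · cases b <;> cases c <;> simp [Fintype.sum_bool]
  · intro x _ hx
    cases b <;> cases c <;> simp [Fintype.sum_bool, hx]
  · simp

/-- During a unit interval, an A-coordinate whose `z`-value at the start
is `1` stays positive (hence its `y` is frozen). -/
lemma sk_freezeA (h : IsSkorokhodSolution (Rmat M) (fluidX i0 C₁0 C₂0) y z)
    {T : ℝ} (hT : 0 ≤ T) (k : Fin 5) (hval : z T (.A k) = 1) :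
    ∀ s ∈ Icc T (T+1), y s (.A k) - y T (.A k) = 0 := by
  apply sk_frozen_of_pos h hT
  intro u hu
  have hzu := z_incr h hT hu.1.le (.A k)
  rw [mulVec_A, hval] at hzu
  have hsum : 0 ≤ ∑ l : Fin 5, AAmat k l * (y u (.A l) - y T (.A l)) :=
    Finset.sum_nonneg fun l _ => mul_nonneg (AA_nonneg k l) (sk_mono h hT hu.1.le _)
  have hθ : thetaVec m (.A k) = -1 := rfl
  rw [hθ] at hzu
  have := hu.2
  rw [hzu]; linarith

lemma sk_freezeB (h : IsSkorokhodSolution (Rmat M) (fluidX i0 C₁0 C₂0) y z)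
    {T : ℝ} (hT : 0 ≤ T) (j : Fin m) (hval : 0 ≤ z T (.B j))
    (hA0 : ∀ s ∈ Icc T (T+1), y s (.A 0) - y T (.A 0) = 0) :
    ∀ s ∈ Icc T (T+1), y s (.B j) - y T (.B j) = 0 := by
  apply sk_passive h hT
  intro s hs hz0
  have hzu := z_incr h hT hs.1 (.B j)
  rw [mulVec_B, hz0] at hzu
  have hθ : thetaVec m (.B j) = 0 := rfl
  rw [hθ, hA0 s hs] at hzu
  have hsum : 0 ≤ ∑ i' : Fin m, ∑ b : Bool, ∑ c : Bool,
      (if (M.Γ i' b c).1 = j then (0:ℝ) else 1) * (y s (.E i' b c) - y T (.E i' b c)) :=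
    tripleSum_nonneg fun i' b c =>
      mul_nonneg (by split <;> norm_num) (sk_mono h hT hs.1 _)
  linarith

lemma sk_freezeC (h : IsSkorokhodSolution (Rmat M) (fluidX i0 C₁0 C₂0) y z)
    {T : ℝ} (hT : 0 ≤ T) (k : Fin 2) (hval : 0 ≤ z T (.C k))
    (hA0 : ∀ s ∈ Icc T (T+1), y s (.A 0) - y T (.A 0) = 0)
    (hA3 : ∀ s ∈ Icc T (T+1), y s (.A 3) - y T (.A 3) = 0) :
    ∀ s ∈ Icc T (T+1), y s (.C k) - y T (.C k) = 0 := by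
  apply sk_passive h hT
  intro s hs hz0
  have hzu := z_incr h hT hs.1 (.C k)
  rw [mulVec_C, hz0] at hzu
  have hθ : thetaVec m (.C k) = 0 := rfl
  rw [hθ, hA0 s hs, hA3 s hs] at hzu
  have hsum : 0 ≤ ∑ i' : Fin m, ∑ b : Bool, ∑ c : Bool,
      ((if k = 0 then ((M.Γ i' b c).2.1:ℝ) else ((M.Γ i' b c).2.2:ℝ)) + 1)
        * (y s (.E i' b c) - y T (.E i' b c)) :=
    tripleSum_nonneg fun i' b c =>
      mul_nonneg (CEcoef_nonneg M k i' b c) (sk_mono h hT hs.1 _)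
  have hD : 0 ≤ y s (.D k) - y T (.D k) := sk_mono h hT hs.1 _
  linarith

lemma sk_freezeD (h : IsSkorokhodSolution (Rmat M) (fluidX i0 C₁0 C₂0) y z)
    {T : ℝ} (hT : 0 ≤ T) (k : Fin 2) (hval : 0 ≤ z T (.D k))
    (hA1 : ∀ s ∈ Icc T (T+1), y s (.A 1) - y T (.A 1) = 0) :
    ∀ s ∈ Icc T (T+1), y s (.D k) - y T (.D k) = 0 := by
  apply sk_passive h hT
  intro s hs hz0
  have hzu := z_incr h hT hs.1 (.D k)
  rw [mulVec_D, hz0] at hzu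
  have hθ : thetaVec m (.D k) = 0 := rfl
  rw [hθ, hA1 s hs] at hzu
  have hC : 0 ≤ y s (.C k) - y T (.C k) := sk_mono h hT hs.1 _
  linarith

lemma sk_freezeE (h : IsSkorokhodSolution (Rmat M) (fluidX i0 C₁0 C₂0) y z)
    {T : ℝ} (hT : 0 ≤ T) (i'' : Fin m) (b c : Bool) (hval : 0 ≤ z T (.E i'' b c))
    (hA0 : ∀ s ∈ Icc T (T+1), y s (.A 0) - y T (.A 0) = 0)
    (hA2 : ∀ s ∈ Icc T (T+1), y s (.A 2) - y T (.A 2) = 0)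
    (hB : ∀ s ∈ Icc T (T+1), y s (.B i'') - y T (.B i'') = 0)
    (hC0 : ∀ s ∈ Icc T (T+1), y s (.C 0) - y T (.C 0) = 0)
    (hC1 : ∀ s ∈ Icc T (T+1), y s (.C 1) - y T (.C 1) = 0) :
    ∀ s ∈ Icc T (T+1), y s (.E i'' b c) - y T (.E i'' b c) = 0 := by
  apply sk_passive h hT
  intro s hs hz0
  have hzu := z_incr h hT hs.1 (.E i'' b c)
  rw [mulVec_E, hz0] at hzu
  have hθ : thetaVec m (.E i'' b c) = 0 := rfl
  rw [hθ, hA0 s hs, hA2 s hs, hB s hs, hC0 s hs, hC1 s hs] at hzu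
  have hF : 0 ≤ y s (.F i'' b c) - y T (.F i'' b c) := sk_mono h hT hs.1 _
  linarith

lemma sk_freezeF (h : IsSkorokhodSolution (Rmat M) (fluidX i0 C₁0 C₂0) y z)
    {T : ℝ} (hT : 0 ≤ T) (i'' : Fin m) (b c : Bool) (hval : 0 ≤ z T (.F i'' b c))
    (hA0 : ∀ s ∈ Icc T (T+1), y s (.A 0) - y T (.A 0) = 0)
    (hA2 : ∀ s ∈ Icc T (T+1), y s (.A 2) - y T (.A 2) = 0)
    (hA3 : ∀ s ∈ Icc T (T+1), y s (.A 3) - y T (.A 3) = 0)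
    (hB : ∀ s ∈ Icc T (T+1), y s (.B i'') - y T (.B i'') = 0)
    (hC0 : ∀ s ∈ Icc T (T+1), y s (.C 0) - y T (.C 0) = 0)
    (hC1 : ∀ s ∈ Icc T (T+1), y s (.C 1) - y T (.C 1) = 0) :
    ∀ s ∈ Icc T (T+1), y s (.F i'' b c) - y T (.F i'' b c) = 0 := by
  apply sk_passive h hT
  intro s hs hz0
  have hzu := z_incr h hT hs.1 (.F i'' b c)
  rw [mulVec_F, hz0] at hzu
  have hθ : thetaVec m (.F i'' b c) = 0 := rfl
  rw [hθ, hA0 s hs, hA2 s hs, hA3 s hs, hB s hs, hC0 s hs, hC1 s hs] at hzu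
  have hE : 0 ≤ y s (.E i'' b c) - y T (.E i'' b c) := sk_mono h hT hs.1 _
  have hA4 : 0 ≤ y s (.A 4) - y T (.A 4) := sk_mono h hT hs.1 _
  linarith

end Helpers

section Phase0

open Set Finset

variable {m : ℕ} {M : CounterMachine m} {i0 : Fin m} {C₁0 C₂0 : ℕ}
variable {y z : ℝ → Idx m → ℝ}

def cNat (C₁ C₂ : ℕ) (k : Fin 2) : ℕ := if k = 0 then C₁ else C₂

lemma ccR_cast (C₁ C₂ : ℕ) (k : Fin 2) : ccR C₁ C₂ k = ((cNat C₁ C₂ k : ℕ) : ℝ) := by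
  unfold ccR cNat; split <;> rfl

lemma mmR_eq (C₁ C₂ : ℕ) (k : Fin 2) :
    mmR C₁ C₂ k = if 0 < cNat C₁ C₂ k then 1 else 0 := by
  unfold mmR mrR cNat; split <;> rfl

lemma phase0 (h : IsSkorokhodSolution (Rmat M) (fluidX i0 C₁0 C₂0) y z)
    {T : ℝ} (hT : 0 ≤ T) (i : Fin m) (C₁ C₂ : ℕ)
    (hzT : ∀ j, z T j = encCfg i C₁ C₂ j) :
    ∀ j, z (T + 1) j = v1 M i C₁ C₂ j := by
  have hmono : ∀ s, T ≤ s → ∀ q, 0 ≤ y s q - y T q := fun s hs q => sk_mono h hT hs q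
  have hznn : ∀ s, T ≤ s → ∀ q, 0 ≤ z s q := fun s hs q => h.2.2.2.1 s (hT.trans hs) q
  -- A-row explicit expressions
  have hzA : ∀ s, T ≤ s → ∀ k : Fin 5, z s (.A k) = encCfg i C₁ C₂ (.A k) - (s - T)
      + (AAmat k 0 * (y s (.A 0) - y T (.A 0)) + AAmat k 1 * (y s (.A 1) - y T (.A 1))
        + AAmat k 2 * (y s (.A 2) - y T (.A 2)) + AAmat k 3 * (y s (.A 3) - y T (.A 3))
        + AAmat k 4 * (y s (.A 4) - y T (.A 4))) := by
    intro s hs k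
    have hz := z_incr h hT hs (.A k)
    rw [mulVec_A, Fin.sum_univ_five] at hz
    rw [hz, hzT]
    have hth : thetaVec m (Idx.A k) = -1 := rfl
    rw [hth]
    ring
  -- step 1 : A1, A2, A3 frozen
  have hA1f := sk_freezeA h hT 1 (by rw [hzT]; simp [encCfg])
  have hA2f := sk_freezeA h hT 2 (by rw [hzT]; simp [encCfg])
  have hA3f := sk_freezeA h hT 3 (by rw [hzT]; simp [encCfg])
  -- step 2 : y_{A,0} moves at unit rate
  have hA0u : ∀ s ∈ Icc T (T+1), y s (.A 0) - y T (.A 0) ≤ 1 * (s - T) := by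
    refine sk_upper_lin h hT (.A 0) 1 zero_le_one ?_
    intro s hs hz0
    have he := hzA s hs.1 0
    rw [hz0] at he
    simp [AAmat, encCfg] at he
    have h1 := hmono s hs.1 (.A 1)
    have h2 := hmono s hs.1 (.A 2)
    have h3 := hmono s hs.1 (.A 3)
    linarith
  have hA0 : ∀ s ∈ Icc T (T+1), y s (.A 0) - y T (.A 0) = s - T := by
    intro s hs
    have he := hzA s hs.1 0
    have hnn := hznn s hs.1 (.A 0)
    rw [he] at hnn
    simp [AAmat, encCfg] at hnn
    rw [hA1f s hs, hA2f s hs, hA3f s hs] at hnn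
    have := hA0u s hs
    linarith
  -- step 3 : A4 frozen
  have hA4f : ∀ s ∈ Icc T (T+1), y s (.A 4) - y T (.A 4) = 0 := by
    apply sk_passive h hT
    intro s hs hz0
    have he := hzA s hs.1 4
    rw [hz0] at he
    simp [AAmat, encCfg] at he
    rw [hA1f s hs, hA2f s hs, hA0 s hs] at he
    ring_nf at he
    have hl := hs.1
    linarith
  -- step 4 : B upper bounds
  have hBu : ∀ j : Fin m, ∀ s ∈ Icc T (T+1), y s (.B j) - y T (.B j) ≤ 1 * (s - T) := by
    intro j
    refine sk_upper_lin h hT (.B j) 1 zero_le_one ?_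
    intro s hs hz0
    have hz := z_incr h hT hs.1 (.B j)
    rw [mulVec_B, hz0, hzT] at hz
    have hθ : thetaVec m (.B j) = 0 := rfl
    rw [hθ] at hz
    have hsum : 0 ≤ ∑ i' : Fin m, ∑ b : Bool, ∑ c : Bool,
        (if (M.Γ i' b c).1 = j then (0:ℝ) else 1) * (y s (.E i' b c) - y T (.E i' b c)) :=
      tripleSum_nonneg fun i' b c =>
        mul_nonneg (by split <;> norm_num) (hmono s hs.1 _)
    have henn : (0:ℝ) ≤ encCfg i C₁ C₂ (.B j) := by
      simp only [encCfg]; split <;> norm_num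
    have := hA0u s hs
    linarith
  -- step 5 : C upper bounds
  have hCu : ∀ k : Fin 2, ∀ s ∈ Icc T (T+1), y s (.C k) - y T (.C k) ≤ 1 * (s - T) := by
    intro k
    refine sk_upper_lin h hT (.C k) 1 zero_le_one ?_
    intro s hs hz0
    have hz := z_incr h hT hs.1 (.C k)
    rw [mulVec_C, hz0, hzT] at hz
    have hθ : thetaVec m (.C k) = 0 := rfl
    rw [hθ, hA3f s hs] at hz
    have hsum : 0 ≤ ∑ i' : Fin m, ∑ b : Bool, ∑ c : Bool,
        ((if k = 0 then ((M.Γ i' b c).2.1:ℝ) else ((M.Γ i' b c).2.2:ℝ)) + 1)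
          * (y s (.E i' b c) - y T (.E i' b c)) :=
      tripleSum_nonneg fun i' b c =>
        mul_nonneg (CEcoef_nonneg M k i' b c) (hmono s hs.1 _)
    have henn : (0:ℝ) ≤ encCfg i C₁ C₂ (.C k) := by
      simp only [encCfg]; split <;> positivity
    have hD := hmono s hs.1 (.D k)
    have := hA0u s hs
    linarith
  -- step 6 : D frozen
  have hDf : ∀ k : Fin 2, ∀ s ∈ Icc T (T+1), y s (.D k) - y T (.D k) = 0 := by
    intro k
    exact sk_freezeD h hT k (by rw [hzT]; simp [encCfg]) hA1f
  -- step 7 : E frozen (z_E stays positive)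
  have hEf : ∀ (i'' : Fin m) (b c : Bool), ∀ s ∈ Icc T (T+1),
      y s (.E i'' b c) - y T (.E i'' b c) = 0 := by
    intro i'' b c
    apply sk_frozen_of_pos h hT
    intro u hu
    have hz := z_incr h hT hu.1.le (.E i'' b c)
    rw [mulVec_E, hzT] at hz
    have hθ : thetaVec m (.E i'' b c) = 0 := rfl
    have huI : u ∈ Icc T (T+1) := ⟨hu.1.le, hu.2.le⟩
    rw [hθ, hA2f u huI, hA0 u huI] at hz
    have hE := hmono u hu.1.le (.E i'' b c)
    have hF := hmono u hu.1.le (.F i'' b c)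
    have hB := hBu i'' u huI
    have hC0n := hmono u hu.1.le (.C 0)
    have hC1n := hmono u hu.1.le (.C 1)
    have hC0u := hCu 0 u huI
    have hC1u := hCu 1 u huI
    have hu2 := hu.2
    simp only [encCfg] at hz
    rw [hz]
    cases b <;> cases c <;> simp only [bnum, if_true, if_false, Bool.false_eq_true] <;>
      norm_num <;> linarith
  -- step 8 : F frozen
  have hFf : ∀ (i'' : Fin m) (b c : Bool), ∀ s ∈ Icc T (T+1),
      y s (.F i'' b c) - y T (.F i'' b c) = 0 := by
    intro i'' b c
    apply sk_frozen_of_pos h hT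
    intro u hu
    have hz := z_incr h hT hu.1.le (.F i'' b c)
    rw [mulVec_F, hzT] at hz
    have hθ : thetaVec m (.F i'' b c) = 0 := rfl
    have huI : u ∈ Icc T (T+1) := ⟨hu.1.le, hu.2.le⟩
    rw [hθ, hA2f u huI, hA3f u huI, hA4f u huI, hA0 u huI] at hz
    have hE := hmono u hu.1.le (.E i'' b c)
    have hF := hmono u hu.1.le (.F i'' b c)
    have hB := hBu i'' u huI
    have hC0n := hmono u hu.1.le (.C 0)
    have hC1n := hmono u hu.1.le (.C 1)
    have hC0u := hCu 0 u huI
    have hC1u := hCu 1 u huI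
    have hu2 := hu.2
    simp only [encCfg] at hz
    rw [hz]
    cases b <;> cases c <;> simp only [bnum, if_true, if_false, Bool.false_eq_true] <;>
      norm_num <;> linarith
  -- step 9 : exact B increments
  have hB : ∀ j : Fin m, ∀ s ∈ Icc T (T+1),
      y s (.B j) - y T (.B j) = (if j = i then s - T else 0) := by
    intro j
    by_cases hji : j = i
    · subst hji
      intro s hs
      have hz := z_incr h hT hs.1 (.B j)
      rw [mulVec_B, hzT] at hz
      have hθ : thetaVec m (.B j) = 0 := rfl
      have hS : (∑ i' : Fin m, ∑ b : Bool, ∑ c : Bool,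
          (if (M.Γ i' b c).1 = j then (0:ℝ) else 1) * (y s (.E i' b c) - y T (.E i' b c)))
          = 0 := tripleSum_zero (fun i' b c => hEf i' b c s hs)
      rw [hθ, hS, hA0 s hs] at hz
      have hnn := hznn s hs.1 (.B j)
      rw [hz] at hnn
      norm_num [encCfg] at hnn
      have := hBu j s hs
      norm_num
      linarith
    · intro s hs
      simp only [if_neg hji]
      refine sk_passive h hT (.B j) ?_ s hs
      intro u hu hz0
      have hz := z_incr h hT hu.1 (.B j)
      rw [mulVec_B, hzT, hz0] at hz
      have hθ : thetaVec m (.B j) = 0 := rfl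
      have hS : (∑ i' : Fin m, ∑ b : Bool, ∑ c : Bool,
          (if (M.Γ i' b c).1 = j then (0:ℝ) else 1) * (y u (.E i' b c) - y T (.E i' b c)))
          = 0 := tripleSum_zero (fun i' b c => hEf i' b c u hu)
      rw [hθ, hS, hA0 u hu] at hz
      simp only [encCfg, if_neg hji] at hz
      have hu2 := hu.2
      linarith
  -- step 10 : exact C increments
  have hC : ∀ k : Fin 2, ∀ s ∈ Icc T (T+1),
      y s (.C k) - y T (.C k) = (1 - mmR C₁ C₂ k) * (s - T) := by
    intro k
    have hcc := ccR_cast C₁ C₂ k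
    have hmm := mmR_eq C₁ C₂ k
    have hencC : encCfg i C₁ C₂ (.C k) = ccR C₁ C₂ k := by
      simp only [encCfg, ccR]
    by_cases hpos : 0 < cNat C₁ C₂ k
    · -- counter positive: C frozen
      intro s hs
      rw [hmm, if_pos hpos]
      norm_num
      refine sk_passive h hT (.C k) ?_ s hs
      intro u hu hz0
      have hz := z_incr h hT hu.1 (.C k)
      rw [mulVec_C, hzT, hz0, hencC] at hz
      have hθ : thetaVec m (.C k) = 0 := rfl
      have hS : (∑ i' : Fin m, ∑ b : Bool, ∑ c : Bool,
          ((if k = 0 then ((M.Γ i' b c).2.1:ℝ) else ((M.Γ i' b c).2.2:ℝ)) + 1)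
            * (y u (.E i' b c) - y T (.E i' b c))) = 0 :=
        tripleSum_zero (fun i' b c => hEf i' b c u hu)
      rw [hθ, hS, hA0 u hu, hA3f u hu, hDf k u hu, hcc] at hz
      have hge1 : (1:ℝ) ≤ (cNat C₁ C₂ k : ℝ) := by exact_mod_cast hpos
      have hu2 := hu.2
      linarith
    · -- counter zero: C moves at unit rate
      intro s hs
      rw [hmm, if_neg hpos]
      have hz := z_incr h hT hs.1 (.C k)
      rw [mulVec_C, hzT, hencC] at hz
      have hθ : thetaVec m (.C k) = 0 := rfl
      have hS : (∑ i' : Fin m, ∑ b : Bool, ∑ c : Bool,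
          ((if k = 0 then ((M.Γ i' b c).2.1:ℝ) else ((M.Γ i' b c).2.2:ℝ)) + 1)
            * (y s (.E i' b c) - y T (.E i' b c))) = 0 :=
        tripleSum_zero (fun i' b c => hEf i' b c s hs)
      rw [hθ, hS, hA0 s hs, hA3f s hs, hDf k s hs, hcc] at hz
      have hc0 : cNat C₁ C₂ k = 0 := by omega
      rw [hc0] at hz
      have hnn := hznn s hs.1 (.C k)
      rw [hz] at hnn
      norm_num at hnn
      have := hCu k s hs
      norm_num
      linarith
  -- final : compute z (T+1)
  have hs1 : T ≤ T + 1 := by linarith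
  have hsI : T + 1 ∈ Icc T (T+1) := ⟨hs1, le_rfl⟩
  intro j
  have hz := z_incr h hT hs1 j
  cases j with
  | A k =>
    rw [mulVec_A, Fin.sum_univ_five] at hz
    rw [hA0 _ hsI, hA1f _ hsI, hA2f _ hsI, hA3f _ hsI, hA4f _ hsI, hzT] at hz
    rw [hz]
    fin_cases k <;> simp [AAmat, encCfg, thetaVec, v1] <;> try norm_num
  | B j' =>
    rw [mulVec_B] at hz
    have hS : (∑ i' : Fin m, ∑ b : Bool, ∑ c : Bool,
        (if (M.Γ i' b c).1 = j' then (0:ℝ) else 1)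
          * (y (T+1) (.E i' b c) - y T (.E i' b c))) = 0 :=
      tripleSum_zero (fun i' b c => hEf i' b c _ hsI)
    rw [hS, hA0 _ hsI, hB j' _ hsI, hzT] at hz
    rw [hz]
    show encCfg i C₁ C₂ (.B j') + (0:ℝ) * _ + _ = _
    by_cases hji : j' = i <;>
      simp [encCfg, v1, hji] <;> ring
  | C k =>
    rw [mulVec_C] at hz
    have hS : (∑ i' : Fin m, ∑ b : Bool, ∑ c : Bool,
        ((if k = 0 then ((M.Γ i' b c).2.1:ℝ) else ((M.Γ i' b c).2.2:ℝ)) + 1)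
          * (y (T+1) (.E i' b c) - y T (.E i' b c))) = 0 :=
      tripleSum_zero (fun i' b c => hEf i' b c _ hsI)
    rw [hS, hA0 _ hsI, hA3f _ hsI, hC k _ hsI, hDf k _ hsI, hzT] at hz
    rw [hz]
    show encCfg i C₁ C₂ (.C k) + (0:ℝ) * _ + _ = _
    simp only [encCfg, v1]
    have : ccR C₁ C₂ k = if k = 0 then (C₁:ℝ) else (C₂:ℝ) := rfl
    rw [← this]
    ring
  | D k =>
    rw [mulVec_D] at hz
    rw [hA1f _ hsI, hC k _ hsI, hDf k _ hsI, hzT] at hz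
    rw [hz]
    show encCfg i C₁ C₂ (.D k) + (0:ℝ) * _ + _ = _
    simp only [encCfg, v1]
    ring
  | E i'' b c =>
    rw [mulVec_E] at hz
    rw [hA0 _ hsI, hA2f _ hsI, hB i'' _ hsI, hC 0 _ hsI, hC 1 _ hsI,
      hEf i'' b c _ hsI, hFf i'' b c _ hsI, hzT] at hz
    rw [hz]
    show encCfg i C₁ C₂ (.E i'' b c) + (0:ℝ) * _ + _ = _
    simp only [encCfg, v1, muR, matR, mmR, mrR]
    cases b <;> cases c <;>
      by_cases h1 : 0 < C₁ <;> by_cases h2 : 0 < C₂ <;> by_cases h3 : i'' = i <;>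
      simp [h1, h2, h3, bnum] <;> ring
  | F i'' b c =>
    rw [mulVec_F] at hz
    rw [hA0 _ hsI, hA2f _ hsI, hA3f _ hsI, hA4f _ hsI, hB i'' _ hsI, hC 0 _ hsI,
      hC 1 _ hsI, hEf i'' b c _ hsI, hFf i'' b c _ hsI, hzT] at hz
    rw [hz]
    show encCfg i C₁ C₂ (.F i'' b c) + (0:ℝ) * _ + _ = _
    simp only [encCfg, v1, muR, matR, mmR, mrR]
    cases b <;> cases c <;>
      by_cases h1 : 0 < C₁ <;> by_cases h2 : 0 < C₂ <;> by_cases h3 : i'' = i <;>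
      simp [h1, h2, h3, bnum] <;> ring

end Phase0

section Phase1

open Set Finset

variable {m : ℕ} {M : CounterMachine m} {i0 : Fin m} {C₁0 C₂0 : ℕ}
variable {y z : ℝ → Idx m → ℝ}

lemma hzA_gen (h : IsSkorokhodSolution (Rmat M) (fluidX i0 C₁0 C₂0) y z)
    {T : ℝ} (hT : 0 ≤ T) {v : Idx m → ℝ} (hzT : ∀ j, z T j = v j) :
    ∀ s, T ≤ s → ∀ k : Fin 5, z s (.A k) = v (.A k) - (s - T)
      + (AAmat k 0 * (y s (.A 0) - y T (.A 0)) + AAmat k 1 * (y s (.A 1) - y T (.A 1))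
        + AAmat k 2 * (y s (.A 2) - y T (.A 2)) + AAmat k 3 * (y s (.A 3) - y T (.A 3))
        + AAmat k 4 * (y s (.A 4) - y T (.A 4))) := by
  intro s hs k
  have hz := z_incr h hT hs (.A k)
  rw [mulVec_A, Fin.sum_univ_five] at hz
  rw [hz, hzT]
  have hth : thetaVec m (Idx.A k) = -1 := rfl
  rw [hth]
  ring

lemma v1C_nonneg (M : CounterMachine m) (i : Fin m) (C₁ C₂ : ℕ) (k : Fin 2) :
    0 ≤ v1 M i C₁ C₂ (.C k) := by
  show 0 ≤ ccR C₁ C₂ k - mmR C₁ C₂ k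
  rw [ccR_cast, mmR_eq]
  by_cases hp : 0 < cNat C₁ C₂ k
  · rw [if_pos hp]
    have : (1:ℝ) ≤ (cNat C₁ C₂ k : ℝ) := by exact_mod_cast hp
    linarith
  · rw [if_neg hp]
    have : (0:ℝ) ≤ (cNat C₁ C₂ k : ℝ) := by positivity
    linarith

lemma phase1 (h : IsSkorokhodSolution (Rmat M) (fluidX i0 C₁0 C₂0) y z)
    {T : ℝ} (hT : 0 ≤ T) (i : Fin m) (C₁ C₂ : ℕ)
    (hzT : ∀ j, z T j = v1 M i C₁ C₂ j) :
    ∀ j, z (T + 1) j = v2 M i C₁ C₂ j := by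
  have hmono : ∀ s, T ≤ s → ∀ q, 0 ≤ y s q - y T q := fun s hs q => sk_mono h hT hs q
  have hznn : ∀ s, T ≤ s → ∀ q, 0 ≤ z s q := fun s hs q => h.2.2.2.1 s (hT.trans hs) q
  have hzA := hzA_gen h hT hzT
  -- A2, A3, A4 frozen
  have hA2f := sk_freezeA h hT 2 (by rw [hzT]; show ![0,0,1,1,1] (2:Fin 5) = 1; norm_num [Matrix.cons_val_one, Matrix.cons_val_two, Matrix.cons_val_three, Matrix.cons_val_four, Matrix.vecHead, Matrix.vecTail])
  have hA3f := sk_freezeA h hT 3 (by rw [hzT]; show ![0,0,1,1,1] (3:Fin 5) = 1; norm_num [Matrix.cons_val_one, Matrix.cons_val_two, Matrix.cons_val_three, Matrix.cons_val_four, Matrix.vecHead, Matrix.vecTail])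
  have hA4f := sk_freezeA h hT 4 (by rw [hzT]; show ![0,0,1,1,1] (4:Fin 5) = 1; norm_num [Matrix.cons_val_one, Matrix.cons_val_two, Matrix.cons_val_three, Matrix.cons_val_four, Matrix.vecHead, Matrix.vecTail])
  -- A1 at unit rate
  have hA1u : ∀ s ∈ Icc T (T+1), y s (.A 1) - y T (.A 1) ≤ 1 * (s - T) := by
    refine sk_upper_lin h hT (.A 1) 1 zero_le_one ?_
    intro s hs hz0
    have he := hzA s hs.1 1
    rw [hz0] at he
    norm_num [AAmat, v1, Matrix.cons_val_one, Matrix.cons_val_two, Matrix.cons_val_three, Matrix.cons_val_four, Matrix.vecHead, Matrix.vecTail] at he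
    have h2 := hmono s hs.1 (.A 2)
    have h3 := hmono s hs.1 (.A 3)
    have h4 := hmono s hs.1 (.A 4)
    linarith
  have hA1 : ∀ s ∈ Icc T (T+1), y s (.A 1) - y T (.A 1) = s - T := by
    intro s hs
    have he := hzA s hs.1 1
    have hnn := hznn s hs.1 (.A 1)
    rw [he] at hnn
    norm_num [AAmat, v1, Matrix.cons_val_one, Matrix.cons_val_two, Matrix.cons_val_three, Matrix.cons_val_four, Matrix.vecHead, Matrix.vecTail] at hnn
    rw [hA2f s hs, hA3f s hs, hA4f s hs] at hnn
    have := hA1u s hs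
    linarith
  -- A0 frozen
  have hA0f : ∀ s ∈ Icc T (T+1), y s (.A 0) - y T (.A 0) = 0 := by
    apply sk_passive h hT
    intro s hs hz0
    have he := hzA s hs.1 0
    rw [hz0] at he
    norm_num [AAmat, v1, Matrix.cons_val_one, Matrix.cons_val_two, Matrix.cons_val_three, Matrix.cons_val_four, Matrix.vecHead, Matrix.vecTail] at he
    rw [hA2f s hs, hA3f s hs, hA1 s hs] at he
    have hl := hs.1
    linarith
  -- C frozen
  have hCf : ∀ k : Fin 2, ∀ s ∈ Icc T (T+1), y s (.C k) - y T (.C k) = 0 := by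
    intro k
    exact sk_freezeC h hT k (by rw [hzT]; exact v1C_nonneg M i C₁ C₂ k) hA0f hA3f
  -- B frozen
  have hBf : ∀ j : Fin m, ∀ s ∈ Icc T (T+1), y s (.B j) - y T (.B j) = 0 := by
    intro j
    exact sk_freezeB h hT j (by rw [hzT]; exact le_refl 0) hA0f
  -- E frozen
  have hEf : ∀ (i'' : Fin m) (b c : Bool), ∀ s ∈ Icc T (T+1),
      y s (.E i'' b c) - y T (.E i'' b c) = 0 := by
    intro i'' b c
    refine sk_freezeE h hT i'' b c ?_ hA0f hA2f (hBf i'') (hCf 0) (hCf 1)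
    rw [hzT]
    show 0 ≤ 3 - muR i C₁ C₂ i'' b c
    have := muR_le_three i C₁ C₂ i'' b c
    linarith
  -- F frozen
  have hFf : ∀ (i'' : Fin m) (b c : Bool), ∀ s ∈ Icc T (T+1),
      y s (.F i'' b c) - y T (.F i'' b c) = 0 := by
    intro i'' b c
    refine sk_freezeF h hT i'' b c ?_ hA0f hA2f hA3f (hBf i'') (hCf 0) (hCf 1)
    rw [hzT]
    show 0 ≤ 4 - muR i C₁ C₂ i'' b c
    have := muR_le_three i C₁ C₂ i'' b c
    linarith
  -- D moves at rate mmR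
  have hD : ∀ k : Fin 2, ∀ s ∈ Icc T (T+1),
      y s (.D k) - y T (.D k) = mmR C₁ C₂ k * (s - T) := by
    intro k
    have hmm01 : mmR C₁ C₂ k = 0 ∨ mmR C₁ C₂ k = 1 := by
      rw [mmR_eq]; split
      · right; rfl
      · left; rfl
    have hDu : ∀ s ∈ Icc T (T+1), y s (.D k) - y T (.D k) ≤ mmR C₁ C₂ k * (s - T) := by
      refine sk_upper_lin h hT (.D k) (mmR C₁ C₂ k)
        (by rcases hmm01 with h' | h' <;> rw [h'] <;> norm_num) ?_
      intro s hs hz0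
      have hz := z_incr h hT hs.1 (.D k)
      rw [mulVec_D, hz0, hzT] at hz
      have hθ : thetaVec m (.D k) = 0 := rfl
      rw [hθ, hA1 s hs] at hz
      have hv : v1 M i C₁ C₂ (Idx.D k) = 1 - mmR C₁ C₂ k := rfl
      rw [hv] at hz
      have hC' := hmono s hs.1 (.C k)
      have hs2 := hs.2
      have hs1 := hs.1
      show y s (.D k) - y T (.D k) ≤ mmR C₁ C₂ k * (s - T)
      rcases hmm01 with h' | h' <;> rw [h'] at hz ⊢ <;> norm_num at hz ⊢ <;> linarith
    intro s hs
    have hnn := hznn s hs.1 (.D k)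
    have hz := z_incr h hT hs.1 (.D k)
    rw [mulVec_D, hzT] at hz
    have hθ : thetaVec m (.D k) = 0 := rfl
    rw [hθ, hA1 s hs, hCf k s hs] at hz
    have hv : v1 M i C₁ C₂ (Idx.D k) = 1 - mmR C₁ C₂ k := rfl
    rw [hv] at hz
    rw [hz] at hnn
    have hup := hDu s hs
    have hDm := hmono s hs.1 (.D k)
    have hs1 := hs.1
    have hs2 := hs.2
    show y s (.D k) - y T (.D k) = mmR C₁ C₂ k * (s - T)
    rcases hmm01 with h' | h' <;> rw [h'] at hnn hup ⊢ <;> norm_num at hnn hup ⊢ <;> linarith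
  -- final computation of z (T+1)
  have hs1 : T ≤ T + 1 := by linarith
  have hsI : T + 1 ∈ Icc T (T+1) := ⟨hs1, le_rfl⟩
  intro j
  have hz := z_incr h hT hs1 j
  cases j with
  | A k =>
    rw [mulVec_A, Fin.sum_univ_five] at hz
    rw [hA0f _ hsI, hA1 _ hsI, hA2f _ hsI, hA3f _ hsI, hA4f _ hsI, hzT] at hz
    rw [hz]
    fin_cases k <;> simp [AAmat, v1, v2, thetaVec, Matrix.vecHead, Matrix.vecTail] <;> try norm_num
  | B j' =>
    rw [mulVec_B] at hz
    have hS : (∑ i' : Fin m, ∑ b : Bool, ∑ c : Bool,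
        (if (M.Γ i' b c).1 = j' then (0:ℝ) else 1)
          * (y (T+1) (.E i' b c) - y T (.E i' b c))) = 0 :=
      tripleSum_zero (fun i' b c => hEf i' b c _ hsI)
    rw [hS, hA0f _ hsI, hBf j' _ hsI, hzT] at hz
    rw [hz]
    show v1 M i C₁ C₂ (.B j') + (0:ℝ) * _ + _ = _
    simp [v1, v2]
  | C k =>
    rw [mulVec_C] at hz
    have hS : (∑ i' : Fin m, ∑ b : Bool, ∑ c : Bool,
        ((if k = 0 then ((M.Γ i' b c).2.1:ℝ) else ((M.Γ i' b c).2.2:ℝ)) + 1)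
          * (y (T+1) (.E i' b c) - y T (.E i' b c))) = 0 :=
      tripleSum_zero (fun i' b c => hEf i' b c _ hsI)
    rw [hS, hA0f _ hsI, hA3f _ hsI, hCf k _ hsI, hD k _ hsI, hzT] at hz
    rw [hz]
    show v1 M i C₁ C₂ (.C k) + (0:ℝ) * _ + _ = _
    show ccR C₁ C₂ k - mmR C₁ C₂ k + (0:ℝ) * _ + _ = ccR C₁ C₂ k
    ring
  | D k =>
    rw [mulVec_D] at hz
    rw [hA1 _ hsI, hCf k _ hsI, hD k _ hsI, hzT] at hz
    rw [hz]
    show v1 M i C₁ C₂ (.D k) + (0:ℝ) * _ + _ = _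
    show 1 - mmR C₁ C₂ k + (0:ℝ) * _ + _ = (0:ℝ)
    ring
  | E i'' b c =>
    rw [mulVec_E] at hz
    rw [hA0f _ hsI, hA2f _ hsI, hBf i'' _ hsI, hCf 0 _ hsI, hCf 1 _ hsI,
      hEf i'' b c _ hsI, hFf i'' b c _ hsI, hzT] at hz
    rw [hz]
    show v1 M i C₁ C₂ (.E i'' b c) + (0:ℝ) * _ + _ = _
    show 3 - muR i C₁ C₂ i'' b c + (0:ℝ) * _ + _ = 3 - muR i C₁ C₂ i'' b c
    ring
  | F i'' b c =>
    rw [mulVec_F] at hz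
    rw [hA0f _ hsI, hA2f _ hsI, hA3f _ hsI, hA4f _ hsI, hBf i'' _ hsI, hCf 0 _ hsI,
      hCf 1 _ hsI, hEf i'' b c _ hsI, hFf i'' b c _ hsI, hzT] at hz
    rw [hz]
    show v1 M i C₁ C₂ (.F i'' b c) + (0:ℝ) * _ + _ = _
    show 4 - muR i C₁ C₂ i'' b c + (0:ℝ) * _ + _ = 4 - muR i C₁ C₂ i'' b c
    ring

end Phase1

section Phase2

open Set Finset

variable {m : ℕ} {M : CounterMachine m} {i0 : Fin m} {C₁0 C₂0 : ℕ}
variable {y z : ℝ → Idx m → ℝ}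

lemma phase2 (h : IsSkorokhodSolution (Rmat M) (fluidX i0 C₁0 C₂0) y z)
    {T : ℝ} (hT : 0 ≤ T) (i : Fin m) (C₁ C₂ : ℕ)
    (hzT : ∀ j, z T j = v2 M i C₁ C₂ j) :
    ∀ j, z (T + 1) j = v3 M i C₁ C₂ j := by
  have hmono : ∀ s, T ≤ s → ∀ q, 0 ≤ y s q - y T q := fun s hs q => sk_mono h hT hs q
  have hznn : ∀ s, T ≤ s → ∀ q, 0 ≤ z s q := fun s hs q => h.2.2.2.1 s (hT.trans hs) q
  have hzA := hzA_gen h hT hzT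
  -- A0, A3, A4 frozen
  have hA0f := sk_freezeA h hT 0 (by rw [hzT]; show ![1,0,0,1,1] (0:Fin 5) = 1; norm_num [Matrix.cons_val_one, Matrix.cons_val_two, Matrix.cons_val_three, Matrix.cons_val_four, Matrix.vecHead, Matrix.vecTail])
  have hA3f := sk_freezeA h hT 3 (by rw [hzT]; show ![1,0,0,1,1] (3:Fin 5) = 1; norm_num [Matrix.cons_val_one, Matrix.cons_val_two, Matrix.cons_val_three, Matrix.cons_val_four, Matrix.vecHead, Matrix.vecTail])
  have hA4f := sk_freezeA h hT 4 (by rw [hzT]; show ![1,0,0,1,1] (4:Fin 5) = 1; norm_num [Matrix.cons_val_one, Matrix.cons_val_two, Matrix.cons_val_three, Matrix.cons_val_four, Matrix.vecHead, Matrix.vecTail])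
  -- A2 at unit rate
  have hA2u : ∀ s ∈ Icc T (T+1), y s (.A 2) - y T (.A 2) ≤ 1 * (s - T) := by
    refine sk_upper_lin h hT (.A 2) 1 zero_le_one ?_
    intro s hs hz0
    have he := hzA s hs.1 2
    rw [hz0] at he
    norm_num [AAmat, v2, Matrix.cons_val_one, Matrix.cons_val_two, Matrix.cons_val_three, Matrix.cons_val_four, Matrix.vecHead, Matrix.vecTail] at he
    have h0 := hmono s hs.1 (.A 0)
    have h3 := hmono s hs.1 (.A 3)
    have h4 := hmono s hs.1 (.A 4)
    linarith
  have hA2 : ∀ s ∈ Icc T (T+1), y s (.A 2) - y T (.A 2) = s - T := by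
    intro s hs
    have he := hzA s hs.1 2
    have hnn := hznn s hs.1 (.A 2)
    rw [he] at hnn
    norm_num [AAmat, v2, Matrix.cons_val_one, Matrix.cons_val_two, Matrix.cons_val_three, Matrix.cons_val_four, Matrix.vecHead, Matrix.vecTail] at hnn
    rw [hA0f s hs, hA3f s hs, hA4f s hs] at hnn
    have := hA2u s hs
    linarith
  -- A1 frozen
  have hA1f : ∀ s ∈ Icc T (T+1), y s (.A 1) - y T (.A 1) = 0 := by
    apply sk_passive h hT
    intro s hs hz0
    have he := hzA s hs.1 1
    rw [hz0] at he
    norm_num [AAmat, v2, Matrix.cons_val_one, Matrix.cons_val_two, Matrix.cons_val_three, Matrix.cons_val_four, Matrix.vecHead, Matrix.vecTail] at he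
    rw [hA3f s hs, hA4f s hs, hA2 s hs] at he
    have hl := hs.1
    linarith
  -- B frozen
  have hBf : ∀ j : Fin m, ∀ s ∈ Icc T (T+1), y s (.B j) - y T (.B j) = 0 := by
    intro j
    exact sk_freezeB h hT j (by rw [hzT]; exact le_refl 0) hA0f
  -- C frozen
  have hCf : ∀ k : Fin 2, ∀ s ∈ Icc T (T+1), y s (.C k) - y T (.C k) = 0 := by
    intro k
    refine sk_freezeC h hT k ?_ hA0f hA3f
    rw [hzT]
    show (0:ℝ) ≤ ccR C₁ C₂ k
    rw [ccR_cast]; positivity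
  -- D frozen
  have hDf : ∀ k : Fin 2, ∀ s ∈ Icc T (T+1), y s (.D k) - y T (.D k) = 0 := by
    intro k
    exact sk_freezeD h hT k (by rw [hzT]; exact le_refl 0) hA1f
  -- F frozen (stays positive)
  have hFf : ∀ (i'' : Fin m) (b c : Bool), ∀ s ∈ Icc T (T+1),
      y s (.F i'' b c) - y T (.F i'' b c) = 0 := by
    intro i'' b c
    apply sk_frozen_of_pos h hT
    intro u hu
    have huI : u ∈ Icc T (T+1) := ⟨hu.1.le, hu.2.le⟩
    have hz := z_incr h hT hu.1.le (.F i'' b c)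
    rw [mulVec_F, hzT] at hz
    have hθ : thetaVec m (.F i'' b c) = 0 := rfl
    rw [hθ, hA0f u huI, hA2 u huI, hA3f u huI, hA4f u huI, hBf i'' u huI,
      hCf 0 u huI, hCf 1 u huI] at hz
    have hE := hmono u hu.1.le (.E i'' b c)
    have hF := hmono u hu.1.le (.F i'' b c)
    have hmu := muR_le_three i C₁ C₂ i'' b c
    have hv : v2 M i C₁ C₂ (Idx.F i'' b c) = 4 - muR i C₁ C₂ i'' b c := rfl
    rw [hv] at hz
    have hu2 := hu.2
    rw [hz]
    ring_nf
    ring_nf at hz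
    nlinarith [hu.2, hu.1]
  -- E increments
  have hE : ∀ (i'' : Fin m) (b c : Bool), ∀ s ∈ Icc T (T+1),
      y s (.E i'' b c) - y T (.E i'' b c) =
        (if i'' = i ∧ b = decide (0 < C₁) ∧ c = decide (0 < C₂) then s - T else 0) := by
    intro i'' b c
    by_cases hm : i'' = i ∧ b = decide (0 < C₁) ∧ c = decide (0 < C₂)
    · -- matching triple : unit rate
      have hmu : muR i C₁ C₂ i'' b c = 3 := by
        obtain ⟨h1, h2, h3⟩ := hm
        rw [h1, h2, h3]
        exact muR_eq_three i C₁ C₂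
      have hEu : ∀ s ∈ Icc T (T+1), y s (.E i'' b c) - y T (.E i'' b c) ≤ 1 * (s - T) := by
        refine sk_upper_lin h hT (.E i'' b c) 1 zero_le_one ?_
        intro s hs hz0
        have hz := z_incr h hT hs.1 (.E i'' b c)
        rw [mulVec_E, hz0, hzT] at hz
        have hθ : thetaVec m (.E i'' b c) = 0 := rfl
        have hv : v2 M i C₁ C₂ (Idx.E i'' b c) = 3 - muR i C₁ C₂ i'' b c := rfl
        rw [hθ, hv, hmu, hA0f s hs, hA2 s hs, hBf i'' s hs, hCf 0 s hs, hCf 1 s hs] at hz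
        have hF := hmono s hs.1 (.F i'' b c)
        have hFz := hFf i'' b c s hs
        linarith
      intro s hs
      rw [if_pos hm]
      have hnn := hznn s hs.1 (.E i'' b c)
      have hz := z_incr h hT hs.1 (.E i'' b c)
      rw [mulVec_E, hzT] at hz
      have hθ : thetaVec m (.E i'' b c) = 0 := rfl
      have hv : v2 M i C₁ C₂ (Idx.E i'' b c) = 3 - muR i C₁ C₂ i'' b c := rfl
      rw [hθ, hv, hmu, hA0f s hs, hA2 s hs, hBf i'' s hs, hCf 0 s hs, hCf 1 s hs,
        hFf i'' b c s hs] at hz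
      rw [hz] at hnn
      have := hEu s hs
      linarith
    · -- non-matching : frozen, z stays positive
      intro s hs
      rw [if_neg hm]
      refine sk_frozen_of_pos h hT (.E i'' b c) ?_ s hs
      intro u hu
      have huI : u ∈ Icc T (T+1) := ⟨hu.1.le, hu.2.le⟩
      have hz := z_incr h hT hu.1.le (.E i'' b c)
      rw [mulVec_E, hzT] at hz
      have hθ : thetaVec m (.E i'' b c) = 0 := rfl
      have hv : v2 M i C₁ C₂ (Idx.E i'' b c) = 3 - muR i C₁ C₂ i'' b c := rfl
      rw [hθ, hv, hA0f u huI, hA2 u huI, hBf i'' u huI, hCf 0 u huI, hCf 1 u huI] at hz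
      have hEm := hmono u hu.1.le (.E i'' b c)
      have hF := hmono u hu.1.le (.F i'' b c)
      have hmu := muR_le_two_of_ne i C₁ C₂ i'' b c hm
      have hu2 := hu.2
      rw [hz]
      ring_nf
      ring_nf at hz
      nlinarith [hu.2, hu.1]
  -- final computation of z (T+1)
  have hs1 : T ≤ T + 1 := by linarith
  have hsI : T + 1 ∈ Icc T (T+1) := ⟨hs1, le_rfl⟩
  have hE1 : ∀ (i'' : Fin m) (b c : Bool), y (T+1) (.E i'' b c) - y T (.E i'' b c) =
      (if i'' = i ∧ b = decide (0 < C₁) ∧ c = decide (0 < C₂) then (1:ℝ) else 0) := by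
    intro i'' b c
    rw [hE i'' b c _ hsI]
    norm_num
  intro j
  have hz := z_incr h hT hs1 j
  cases j with
  | A k =>
    rw [mulVec_A, Fin.sum_univ_five] at hz
    rw [hA0f _ hsI, hA1f _ hsI, hA2 _ hsI, hA3f _ hsI, hA4f _ hsI, hzT] at hz
    rw [hz]
    fin_cases k <;> simp [AAmat, v2, v3, thetaVec, Matrix.vecHead, Matrix.vecTail] <;>
      try norm_num
  | B j' =>
    rw [mulVec_B] at hz
    simp only [hE1] at hz
    rw [tripleSum_single (fun i' b c => if (M.Γ i' b c).1 = j' then (0:ℝ) else 1) 1 i _ _,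
      hA0f _ hsI, hBf j' _ hsI, hzT] at hz
    rw [hz]
    show v2 M i C₁ C₂ (.B j') + (0:ℝ) * _ + _ = _
    show (0:ℝ) + (0:ℝ) * _ + _ = v3 M i C₁ C₂ (.B j')
    show (0:ℝ) + (0:ℝ) * (T+1-T) + (-(0:ℝ) + 0 +
      (if (M.Γ i (decide (0 < C₁)) (decide (0 < C₂))).1 = j' then (0:ℝ) else 1) * 1)
      = if j' = newI M i C₁ C₂ then 0 else 1
    by_cases hj : j' = newI M i C₁ C₂
    · rw [if_pos hj, if_pos (by rw [hj]; rfl)]; ring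
    · rw [if_neg hj, if_neg (by intro hh; exact hj (by rw [← hh]; rfl))]; ring
  | C k =>
    rw [mulVec_C] at hz
    simp only [hE1] at hz
    rw [tripleSum_single
      (fun i' b c => (if k = 0 then ((M.Γ i' b c).2.1:ℝ) else ((M.Γ i' b c).2.2:ℝ)) + 1)
      1 i _ _, hA0f _ hsI, hA3f _ hsI, hCf k _ hsI, hDf k _ hsI, hzT] at hz
    rw [hz]
    show v2 M i C₁ C₂ (.C k) + (0:ℝ) * _ + _ = _
    show ccR C₁ C₂ k + (0:ℝ) * _ + _ = ccR C₁ C₂ k + ddR M i C₁ C₂ k + 1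
    have hd : (if k = 0 then ((M.Γ i (decide (0 < C₁)) (decide (0 < C₂))).2.1:ℝ)
        else ((M.Γ i (decide (0 < C₁)) (decide (0 < C₂))).2.2:ℝ)) = ddR M i C₁ C₂ k := by
      unfold ddR delZ
      split <;> simp
    rw [hd]
    ring
  | D k =>
    rw [mulVec_D] at hz
    rw [hA1f _ hsI, hCf k _ hsI, hDf k _ hsI, hzT] at hz
    rw [hz]
    show v2 M i C₁ C₂ (.D k) + (0:ℝ) * _ + _ = _
    show (0:ℝ) + (0:ℝ) * _ + _ = (0:ℝ)
    ring
  | E i'' b c =>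
    rw [mulVec_E] at hz
    rw [hA0f _ hsI, hA2 _ hsI, hBf i'' _ hsI, hCf 0 _ hsI, hCf 1 _ hsI,
      hE i'' b c _ hsI, hFf i'' b c _ hsI, hzT] at hz
    rw [hz]
    show v2 M i C₁ C₂ (.E i'' b c) + (0:ℝ) * _ + _ = _
    show 3 - muR i C₁ C₂ i'' b c + (0:ℝ) * _ + _ = wR i C₁ C₂ i'' b c - 1
    unfold wR
    split <;> ring
  | F i'' b c =>
    rw [mulVec_F] at hz
    rw [hA0f _ hsI, hA2 _ hsI, hA3f _ hsI, hA4f _ hsI, hBf i'' _ hsI, hCf 0 _ hsI,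
      hCf 1 _ hsI, hE i'' b c _ hsI, hFf i'' b c _ hsI, hzT] at hz
    rw [hz]
    show v2 M i C₁ C₂ (.F i'' b c) + (0:ℝ) * _ + _ = _
    show 4 - muR i C₁ C₂ i'' b c + (0:ℝ) * _ + _ = wR i C₁ C₂ i'' b c
    unfold wR
    split <;> ring

end Phase2

section Phase3

open Set Finset

variable {m : ℕ} {M : CounterMachine m} {i0 : Fin m} {C₁0 C₂0 : ℕ}
variable {y z : ℝ → Idx m → ℝ}

lemma phase3 (h : IsSkorokhodSolution (Rmat M) (fluidX i0 C₁0 C₂0) y z)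
    {T : ℝ} (hT : 0 ≤ T) (i : Fin m) (C₁ C₂ : ℕ)
    (hzT : ∀ j, z T j = v3 M i C₁ C₂ j) :
    ∀ j, z (T + 1) j = v4 M i C₁ C₂ j := by
  have hmono : ∀ s, T ≤ s → ∀ q, 0 ≤ y s q - y T q := fun s hs q => sk_mono h hT hs q
  have hznn : ∀ s, T ≤ s → ∀ q, 0 ≤ z s q := fun s hs q => h.2.2.2.1 s (hT.trans hs) q
  have hzA := hzA_gen h hT hzT
  -- A0, A1, A4 frozen
  have hA0f := sk_freezeA h hT 0 (by rw [hzT]; show ![1,1,0,0,1] (0:Fin 5) = 1; norm_num [Matrix.cons_val_one, Matrix.cons_val_two, Matrix.cons_val_three, Matrix.cons_val_four, Matrix.vecHead, Matrix.vecTail])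
  have hA1f := sk_freezeA h hT 1 (by rw [hzT]; show ![1,1,0,0,1] (1:Fin 5) = 1; norm_num [Matrix.cons_val_one, Matrix.cons_val_two, Matrix.cons_val_three, Matrix.cons_val_four, Matrix.vecHead, Matrix.vecTail])
  have hA4f := sk_freezeA h hT 4 (by rw [hzT]; show ![1,1,0,0,1] (4:Fin 5) = 1; norm_num [Matrix.cons_val_one, Matrix.cons_val_two, Matrix.cons_val_three, Matrix.cons_val_four, Matrix.vecHead, Matrix.vecTail])
  -- A3 at unit rate
  have hA3u : ∀ s ∈ Icc T (T+1), y s (.A 3) - y T (.A 3) ≤ 1 * (s - T) := by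
    refine sk_upper_lin h hT (.A 3) 1 zero_le_one ?_
    intro s hs hz0
    have he := hzA s hs.1 3
    rw [hz0] at he
    norm_num [AAmat, v3, Matrix.cons_val_one, Matrix.cons_val_two, Matrix.cons_val_three, Matrix.cons_val_four, Matrix.vecHead, Matrix.vecTail] at he
    have h0 := hmono s hs.1 (.A 0)
    have h1 := hmono s hs.1 (.A 1)
    have h4 := hmono s hs.1 (.A 4)
    linarith
  have hA3 : ∀ s ∈ Icc T (T+1), y s (.A 3) - y T (.A 3) = s - T := by
    intro s hs
    have he := hzA s hs.1 3
    have hnn := hznn s hs.1 (.A 3)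
    rw [he] at hnn
    norm_num [AAmat, v3, Matrix.cons_val_one, Matrix.cons_val_two, Matrix.cons_val_three, Matrix.cons_val_four, Matrix.vecHead, Matrix.vecTail] at hnn
    rw [hA0f s hs, hA1f s hs, hA4f s hs] at hnn
    have := hA3u s hs
    linarith
  -- A2 frozen
  have hA2f : ∀ s ∈ Icc T (T+1), y s (.A 2) - y T (.A 2) = 0 := by
    apply sk_passive h hT
    intro s hs hz0
    have he := hzA s hs.1 2
    rw [hz0] at he
    norm_num [AAmat, v3, Matrix.cons_val_one, Matrix.cons_val_two, Matrix.cons_val_three, Matrix.cons_val_four, Matrix.vecHead, Matrix.vecTail] at he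
    rw [hA0f s hs, hA4f s hs, hA3 s hs] at he
    have hl := hs.1
    linarith
  -- B frozen
  have hBf : ∀ j : Fin m, ∀ s ∈ Icc T (T+1), y s (.B j) - y T (.B j) = 0 := by
    intro j
    refine sk_freezeB h hT j ?_ hA0f
    rw [hzT]
    show (0:ℝ) ≤ if j = newI M i C₁ C₂ then 0 else 1
    split <;> norm_num
  -- C frozen
  have hCf : ∀ k : Fin 2, ∀ s ∈ Icc T (T+1), y s (.C k) - y T (.C k) = 0 := by
    intro k
    apply sk_passive h hT
    intro s hs hz0
    have hz := z_incr h hT hs.1 (.C k)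
    rw [mulVec_C, hz0, hzT] at hz
    have hθ : thetaVec m (.C k) = 0 := rfl
    have hv : v3 M i C₁ C₂ (Idx.C k) = ccR C₁ C₂ k + ddR M i C₁ C₂ k + 1 := rfl
    rw [hθ, hv, hA0f s hs, hA3 s hs] at hz
    have hsum : 0 ≤ ∑ i' : Fin m, ∑ b : Bool, ∑ c : Bool,
        ((if k = 0 then ((M.Γ i' b c).2.1:ℝ) else ((M.Γ i' b c).2.2:ℝ)) + 1)
          * (y s (.E i' b c) - y T (.E i' b c)) :=
      tripleSum_nonneg fun i' b c =>
        mul_nonneg (CEcoef_nonneg M k i' b c) (hmono s hs.1 _)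
    have hD' := hmono s hs.1 (.D k)
    have hcd := cc_dd_nonneg M i C₁ C₂ k
    have hs2 := hs.2
    linarith
  -- D frozen
  have hDf : ∀ k : Fin 2, ∀ s ∈ Icc T (T+1), y s (.D k) - y T (.D k) = 0 := by
    intro k
    exact sk_freezeD h hT k (by rw [hzT]; exact le_refl 0) hA1f
  -- E frozen
  have hEf : ∀ (i'' : Fin m) (b c : Bool), ∀ s ∈ Icc T (T+1),
      y s (.E i'' b c) - y T (.E i'' b c) = 0 := by
    intro i'' b c
    refine sk_freezeE h hT i'' b c ?_ hA0f hA2f (hBf i'') (hCf 0) (hCf 1)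
    rw [hzT]
    show 0 ≤ wR i C₁ C₂ i'' b c - 1
    have := wR_ge_one i C₁ C₂ i'' b c
    linarith
  -- F : piecewise activation
  have hF : ∀ (i'' : Fin m) (b c : Bool), ∀ s ∈ Icc T (T+1),
      y s (.F i'' b c) - y T (.F i'' b c)
        = max 0 (4 * (s - T) - wR i C₁ C₂ i'' b c) := by
    intro i'' b c
    have hw1 := wR_ge_one i C₁ C₂ i'' b c
    have hzF : ∀ s ∈ Icc T (T+1), z s (.F i'' b c) = wR i C₁ C₂ i'' b c
        - 4 * (s - T) + (y s (.F i'' b c) - y T (.F i'' b c)) := by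
      intro s hs
      have hz := z_incr h hT hs.1 (.F i'' b c)
      rw [mulVec_F, hzT] at hz
      have hθ : thetaVec m (.F i'' b c) = 0 := rfl
      have hv : v3 M i C₁ C₂ (Idx.F i'' b c) = wR i C₁ C₂ i'' b c := rfl
      rw [hθ, hv, hA0f s hs, hA2f s hs, hA3 s hs, hA4f s hs, hBf i'' s hs,
        hCf 0 s hs, hCf 1 s hs, hEf i'' b c s hs] at hz
      rw [hz]; ring
    have hup : ∀ s ∈ Icc T (T+1), y s (.F i'' b c) - y T (.F i'' b c)
        ≤ max 0 (4 * (s - T) - wR i C₁ C₂ i'' b c) := by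
      refine sk_upper h hT (.F i'' b c)
        (fun s => max 0 (4 * (s - T) - wR i C₁ C₂ i'' b c)) ?_ ?_ ?_ ?_
      · exact continuousOn_const.sup
          ((continuousOn_const.mul (continuousOn_id.sub continuousOn_const)).sub
            continuousOn_const)
      · intro a _ b' _ hab
        exact max_le_max le_rfl (by linarith)
      · exact le_max_left 0 _
      · intro s hs hz0
        have he := hzF s hs
        rw [hz0] at he
        have : y s (.F i'' b c) - y T (.F i'' b c)
            = 4 * (s - T) - wR i C₁ C₂ i'' b c := by linarith
        rw [this]
        exact le_max_right _ _
    intro s hs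
    have hnn := hznn s hs.1 (.F i'' b c)
    rw [hzF s hs] at hnn
    have h1 := hup s hs
    have h2 := hmono s hs.1 (.F i'' b c)
    have h3 : 4 * (s - T) - wR i C₁ C₂ i'' b c
        ≤ y s (.F i'' b c) - y T (.F i'' b c) := by linarith
    exact le_antisymm h1 (max_le h2 h3)
  -- final computation of z (T+1)
  have hs1 : T ≤ T + 1 := by linarith
  have hsI : T + 1 ∈ Icc T (T+1) := ⟨hs1, le_rfl⟩
  have hF1 : ∀ (i'' : Fin m) (b c : Bool), y (T+1) (.F i'' b c) - y T (.F i'' b c)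
      = 4 - wR i C₁ C₂ i'' b c := by
    intro i'' b c
    rw [hF i'' b c _ hsI]
    have hw3 := wR_le_three i C₁ C₂ i'' b c
    rw [max_eq_right (by linarith)]
    ring
  intro j
  have hz := z_incr h hT hs1 j
  cases j with
  | A k =>
    rw [mulVec_A, Fin.sum_univ_five] at hz
    rw [hA0f _ hsI, hA1f _ hsI, hA2f _ hsI, hA3 _ hsI, hA4f _ hsI, hzT] at hz
    rw [hz]
    fin_cases k <;> simp [AAmat, v3, v4, thetaVec, Matrix.vecHead, Matrix.vecTail] <;>
      try norm_num
  | B j' =>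
    rw [mulVec_B] at hz
    have hS : (∑ i' : Fin m, ∑ b : Bool, ∑ c : Bool,
        (if (M.Γ i' b c).1 = j' then (0:ℝ) else 1)
          * (y (T+1) (.E i' b c) - y T (.E i' b c))) = 0 :=
      tripleSum_zero (fun i' b c => hEf i' b c _ hsI)
    rw [hS, hA0f _ hsI, hBf j' _ hsI, hzT] at hz
    rw [hz]
    show v3 M i C₁ C₂ (.B j') + (0:ℝ) * _ + _ = v4 M i C₁ C₂ (.B j')
    show (if j' = newI M i C₁ C₂ then (0:ℝ) else 1) + (0:ℝ) * _ + _
      = if j' = newI M i C₁ C₂ then (0:ℝ) else 1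
    ring
  | C k =>
    rw [mulVec_C] at hz
    have hS : (∑ i' : Fin m, ∑ b : Bool, ∑ c : Bool,
        ((if k = 0 then ((M.Γ i' b c).2.1:ℝ) else ((M.Γ i' b c).2.2:ℝ)) + 1)
          * (y (T+1) (.E i' b c) - y T (.E i' b c))) = 0 :=
      tripleSum_zero (fun i' b c => hEf i' b c _ hsI)
    rw [hS, hA0f _ hsI, hA3 _ hsI, hCf k _ hsI, hDf k _ hsI, hzT] at hz
    rw [hz]
    show v3 M i C₁ C₂ (.C k) + (0:ℝ) * _ + _ = _
    show ccR C₁ C₂ k + ddR M i C₁ C₂ k + 1 + (0:ℝ) * _ + _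
      = ccR C₁ C₂ k + ddR M i C₁ C₂ k
    ring
  | D k =>
    rw [mulVec_D] at hz
    rw [hA1f _ hsI, hCf k _ hsI, hDf k _ hsI, hzT] at hz
    rw [hz]
    show v3 M i C₁ C₂ (.D k) + (0:ℝ) * _ + _ = _
    show (0:ℝ) + (0:ℝ) * _ + _ = (0:ℝ)
    ring
  | E i'' b c =>
    rw [mulVec_E] at hz
    rw [hA0f _ hsI, hA2f _ hsI, hBf i'' _ hsI, hCf 0 _ hsI, hCf 1 _ hsI,
      hEf i'' b c _ hsI, hF1 i'' b c, hzT] at hz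
    rw [hz]
    show v3 M i C₁ C₂ (.E i'' b c) + (0:ℝ) * _ + _ = _
    show wR i C₁ C₂ i'' b c - 1 + (0:ℝ) * _ + _ = (3:ℝ)
    ring
  | F i'' b c =>
    rw [mulVec_F] at hz
    rw [hA0f _ hsI, hA2f _ hsI, hA3 _ hsI, hA4f _ hsI, hBf i'' _ hsI, hCf 0 _ hsI,
      hCf 1 _ hsI, hEf i'' b c _ hsI, hF1 i'' b c, hzT] at hz
    rw [hz]
    show v3 M i C₁ C₂ (.F i'' b c) + (0:ℝ) * _ + _ = _
    show wR i C₁ C₂ i'' b c + (0:ℝ) * _ + _ = (0:ℝ)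
    ring

end Phase3

section Phase4

open Set Finset

variable {m : ℕ} {M : CounterMachine m} {i0 : Fin m} {C₁0 C₂0 : ℕ}
variable {y z : ℝ → Idx m → ℝ}

lemma phase4 (h : IsSkorokhodSolution (Rmat M) (fluidX i0 C₁0 C₂0) y z)
    {T : ℝ} (hT : 0 ≤ T) (i : Fin m) (C₁ C₂ : ℕ)
    (hzT : ∀ j, z T j = v4 M i C₁ C₂ j) :
    (∀ s ∈ Icc T (T+1), y s (.A 4) - y T (.A 4) = s - T) ∧
    (∀ k : Fin 5, k ≠ 4 → ∀ s ∈ Icc T (T+1), y s (.A k) - y T (.A k) = 0) ∧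
    (∀ j : Fin m, ∀ s ∈ Icc T (T+1), y s (.B j) - y T (.B j) = 0) ∧
    (∀ k : Fin 2, ∀ s ∈ Icc T (T+1), y s (.C k) - y T (.C k) = 0) ∧
    (∀ k : Fin 2, ∀ s ∈ Icc T (T+1), y s (.D k) - y T (.D k) = 0) ∧
    (∀ (i'' : Fin m) (b c : Bool), ∀ s ∈ Icc T (T+1),
        y s (.E i'' b c) - y T (.E i'' b c) = 0) ∧
    (∀ (i'' : Fin m) (b c : Bool), ∀ s ∈ Icc T (T+1),
        y s (.F i'' b c) - y T (.F i'' b c) = 0) ∧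
    (∀ j, z (T + 1) j = v5 M i C₁ C₂ j) := by
  have hmono : ∀ s, T ≤ s → ∀ q, 0 ≤ y s q - y T q := fun s hs q => sk_mono h hT hs q
  have hznn : ∀ s, T ≤ s → ∀ q, 0 ≤ z s q := fun s hs q => h.2.2.2.1 s (hT.trans hs) q
  have hzA := hzA_gen h hT hzT
  have hA0f := sk_freezeA h hT 0 (by rw [hzT]; show ![1,1,1,0,0] (0:Fin 5) = 1; norm_num [Matrix.cons_val_one, Matrix.cons_val_two, Matrix.cons_val_three, Matrix.cons_val_four, Matrix.vecHead, Matrix.vecTail])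
  have hA1f := sk_freezeA h hT 1 (by rw [hzT]; show ![1,1,1,0,0] (1:Fin 5) = 1; norm_num [Matrix.cons_val_one, Matrix.cons_val_two, Matrix.cons_val_three, Matrix.cons_val_four, Matrix.vecHead, Matrix.vecTail])
  have hA2f := sk_freezeA h hT 2 (by rw [hzT]; show ![1,1,1,0,0] (2:Fin 5) = 1; norm_num [Matrix.cons_val_one, Matrix.cons_val_two, Matrix.cons_val_three, Matrix.cons_val_four, Matrix.vecHead, Matrix.vecTail])
  -- A4 at unit rate
  have hA4u : ∀ s ∈ Icc T (T+1), y s (.A 4) - y T (.A 4) ≤ 1 * (s - T) := by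
    refine sk_upper_lin h hT (.A 4) 1 zero_le_one ?_
    intro s hs hz0
    have he := hzA s hs.1 4
    rw [hz0] at he
    norm_num [AAmat, v4, Matrix.cons_val_one, Matrix.cons_val_two, Matrix.cons_val_three, Matrix.cons_val_four, Matrix.vecHead, Matrix.vecTail] at he
    have h0 := hmono s hs.1 (.A 0)
    have h1 := hmono s hs.1 (.A 1)
    have h2 := hmono s hs.1 (.A 2)
    linarith
  have hA4 : ∀ s ∈ Icc T (T+1), y s (.A 4) - y T (.A 4) = s - T := by
    intro s hs
    have he := hzA s hs.1 4
    have hnn := hznn s hs.1 (.A 4)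
    rw [he] at hnn
    norm_num [AAmat, v4, Matrix.cons_val_one, Matrix.cons_val_two, Matrix.cons_val_three, Matrix.cons_val_four, Matrix.vecHead, Matrix.vecTail] at hnn
    rw [hA0f s hs, hA1f s hs, hA2f s hs] at hnn
    have := hA4u s hs
    linarith
  -- A3 frozen
  have hA3f : ∀ s ∈ Icc T (T+1), y s (.A 3) - y T (.A 3) = 0 := by
    apply sk_passive h hT
    intro s hs hz0
    have he := hzA s hs.1 3
    rw [hz0] at he
    norm_num [AAmat, v4, Matrix.cons_val_one, Matrix.cons_val_two, Matrix.cons_val_three, Matrix.cons_val_four, Matrix.vecHead, Matrix.vecTail] at he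
    rw [hA0f s hs, hA1f s hs, hA4 s hs] at he
    have hl := hs.1
    linarith
  -- B frozen
  have hBf : ∀ j : Fin m, ∀ s ∈ Icc T (T+1), y s (.B j) - y T (.B j) = 0 := by
    intro j
    refine sk_freezeB h hT j ?_ hA0f
    rw [hzT]
    show (0:ℝ) ≤ if j = newI M i C₁ C₂ then 0 else 1
    split <;> norm_num
  -- C frozen
  have hCf : ∀ k : Fin 2, ∀ s ∈ Icc T (T+1), y s (.C k) - y T (.C k) = 0 := by
    intro k
    refine sk_freezeC h hT k ?_ hA0f hA3f
    rw [hzT]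
    show (0:ℝ) ≤ ccR C₁ C₂ k + ddR M i C₁ C₂ k
    exact cc_dd_nonneg M i C₁ C₂ k
  -- D frozen
  have hDf : ∀ k : Fin 2, ∀ s ∈ Icc T (T+1), y s (.D k) - y T (.D k) = 0 := by
    intro k
    exact sk_freezeD h hT k (by rw [hzT]; exact le_refl 0) hA1f
  -- E frozen
  have hEf : ∀ (i'' : Fin m) (b c : Bool), ∀ s ∈ Icc T (T+1),
      y s (.E i'' b c) - y T (.E i'' b c) = 0 := by
    intro i'' b c
    refine sk_freezeE h hT i'' b c ?_ hA0f hA2f (hBf i'') (hCf 0) (hCf 1)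
    rw [hzT]
    show (0:ℝ) ≤ 3
    norm_num
  -- F frozen
  have hFf : ∀ (i'' : Fin m) (b c : Bool), ∀ s ∈ Icc T (T+1),
      y s (.F i'' b c) - y T (.F i'' b c) = 0 := by
    intro i'' b c
    refine sk_freezeF h hT i'' b c ?_ hA0f hA2f hA3f (hBf i'') (hCf 0) (hCf 1)
    rw [hzT]
    exact le_refl 0
  refine ⟨hA4, ?_, hBf, hCf, hDf, hEf, hFf, ?_⟩
  · intro k hk
    fin_cases k
    · exact hA0f
    · exact hA1f
    · exact hA2f
    · exact hA3f
    · exact absurd rfl hk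
  -- final computation of z (T+1)
  have hs1 : T ≤ T + 1 := by linarith
  have hsI : T + 1 ∈ Icc T (T+1) := ⟨hs1, le_rfl⟩
  intro j
  have hz := z_incr h hT hs1 j
  cases j with
  | A k =>
    rw [mulVec_A, Fin.sum_univ_five] at hz
    rw [hA0f _ hsI, hA1f _ hsI, hA2f _ hsI, hA3f _ hsI, hA4 _ hsI, hzT] at hz
    rw [hz]
    fin_cases k <;> simp [AAmat, v4, v5, thetaVec, Matrix.vecHead, Matrix.vecTail] <;>
      try norm_num
  | B j' =>
    rw [mulVec_B] at hz
    have hS : (∑ i' : Fin m, ∑ b : Bool, ∑ c : Bool,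
        (if (M.Γ i' b c).1 = j' then (0:ℝ) else 1)
          * (y (T+1) (.E i' b c) - y T (.E i' b c))) = 0 :=
      tripleSum_zero (fun i' b c => hEf i' b c _ hsI)
    rw [hS, hA0f _ hsI, hBf j' _ hsI, hzT] at hz
    rw [hz]
    show v4 M i C₁ C₂ (.B j') + (0:ℝ) * _ + _ = v5 M i C₁ C₂ (.B j')
    show (if j' = newI M i C₁ C₂ then (0:ℝ) else 1) + (0:ℝ) * _ + _
      = if j' = newI M i C₁ C₂ then (0:ℝ) else 1
    ring
  | C k =>
    rw [mulVec_C] at hz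
    have hS : (∑ i' : Fin m, ∑ b : Bool, ∑ c : Bool,
        ((if k = 0 then ((M.Γ i' b c).2.1:ℝ) else ((M.Γ i' b c).2.2:ℝ)) + 1)
          * (y (T+1) (.E i' b c) - y T (.E i' b c))) = 0 :=
      tripleSum_zero (fun i' b c => hEf i' b c _ hsI)
    rw [hS, hA0f _ hsI, hA3f _ hsI, hCf k _ hsI, hDf k _ hsI, hzT] at hz
    rw [hz]
    show v4 M i C₁ C₂ (.C k) + (0:ℝ) * _ + _ = _
    show ccR C₁ C₂ k + ddR M i C₁ C₂ k + (0:ℝ) * _ + _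
      = ccR C₁ C₂ k + ddR M i C₁ C₂ k
    ring
  | D k =>
    rw [mulVec_D] at hz
    rw [hA1f _ hsI, hCf k _ hsI, hDf k _ hsI, hzT] at hz
    rw [hz]
    show v4 M i C₁ C₂ (.D k) + (0:ℝ) * _ + _ = _
    show (0:ℝ) + (0:ℝ) * _ + _ = (0:ℝ)
    ring
  | E i'' b c =>
    rw [mulVec_E] at hz
    rw [hA0f _ hsI, hA2f _ hsI, hBf i'' _ hsI, hCf 0 _ hsI, hCf 1 _ hsI,
      hEf i'' b c _ hsI, hFf i'' b c _ hsI, hzT] at hz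
    rw [hz]
    show v4 M i C₁ C₂ (.E i'' b c) + (0:ℝ) * _ + _ = _
    show (3:ℝ) + (0:ℝ) * _ + _ = (3:ℝ)
    ring
  | F i'' b c =>
    rw [mulVec_F] at hz
    rw [hA0f _ hsI, hA2f _ hsI, hA3f _ hsI, hA4 _ hsI, hBf i'' _ hsI, hCf 0 _ hsI,
      hCf 1 _ hsI, hEf i'' b c _ hsI, hFf i'' b c _ hsI, hzT] at hz
    rw [hz]
    show v4 M i C₁ C₂ (.F i'' b c) + (0:ℝ) * _ + _ = _
    show (0:ℝ) + (0:ℝ) * _ + _ = (4:ℝ)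
    ring

end Phase4

section Final

open Set Finset

variable {m : ℕ}

lemma cc_dd_nonneg_int (M : CounterMachine m) (i : Fin m) (C₁ C₂ : ℕ) (k : Fin 2) :
    0 ≤ (cNat C₁ C₂ k : ℤ) + delZ M i C₁ C₂ k := by
  have hcons := M.consistent i (decide (0 < C₁)) (decide (0 < C₂))
  have hmoves := M.moves i (decide (0 < C₁)) (decide (0 < C₂))
  simp only [Set.mem_insert_iff, Set.mem_singleton_iff] at hmoves
  have hge : -1 ≤ delZ M i C₁ C₂ k := by
    unfold delZ
    rcases hmoves with h | h | h | h | h <;> fin_cases k <;> simp_all <;> omega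
  have key : ∀ (C : ℕ) (d : ℤ), -1 ≤ d → (C = 0 → 0 ≤ d) → 0 ≤ (C:ℤ) + d := by
    intro C d h1 h2
    by_cases hC : C = 0
    · have := h2 hC; omega
    · have : 1 ≤ C := Nat.one_le_iff_ne_zero.2 hC; omega
  by_cases hk : k = 0
  · rw [hk] at hge ⊢
    have hc : cNat C₁ C₂ 0 = C₁ := rfl
    rw [hc]
    refine key C₁ _ hge ?_
    intro hC0
    have hb : decide (0 < C₁) = false := by simp [hC0]
    have := hcons.1 hb
    simpa [delZ]
  · have hk1 : k = 1 := by omega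
    rw [hk1] at hge ⊢
    have hc : cNat C₁ C₂ 1 = C₂ := rfl
    rw [hc]
    refine key C₂ _ hge ?_
    intro hC0
    have hb : decide (0 < C₂) = false := by simp [hC0]
    have := hcons.2 hb
    have hd : delZ M i C₁ C₂ 1 = (M.Γ i (decide (0 < C₁)) (decide (0 < C₂))).2.2 := by
      unfold delZ; norm_num
    rw [hd]
    exact this

lemma v5_eq_enc (M : CounterMachine m) (i : Fin m) (C₁ C₂ : ℕ) :
    ∀ p, v5 M i C₁ C₂ p =
      encCfg (M.step (i, C₁, C₂)).1 (M.step (i, C₁, C₂)).2.1 (M.step (i, C₁, C₂)).2.2 p := by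
  have hstep1 : (M.step (i, C₁, C₂)).1 = newI M i C₁ C₂ := rfl
  have hstep21 : (M.step (i, C₁, C₂)).2.1 = ((C₁ : ℤ) + delZ M i C₁ C₂ 0).toNat := rfl
  have hstep22 : (M.step (i, C₁, C₂)).2.2 = ((C₂ : ℤ) + delZ M i C₁ C₂ 1).toNat := by
    show ((C₂ : ℤ) + (M.Γ i (decide (0 < C₁)) (decide (0 < C₂))).2.2).toNat = _
    unfold delZ
    norm_num
  intro p
  cases p with
  | A k =>
    show ![0,1,1,1,0] k = encCfg _ _ _ (.A k)
    fin_cases k <;> simp [encCfg]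
  | B j =>
    show (if j = newI M i C₁ C₂ then (0:ℝ) else 1) = _
    simp only [encCfg, hstep1]
  | C k =>
    show ccR C₁ C₂ k + ddR M i C₁ C₂ k = encCfg _ _ _ (.C k)
    have hnn0 := cc_dd_nonneg_int M i C₁ C₂ 0
    have hnn1 := cc_dd_nonneg_int M i C₁ C₂ 1
    have hc0 : cNat C₁ C₂ 0 = C₁ := rfl
    have hc1 : cNat C₁ C₂ 1 = C₂ := rfl
    rw [hc0] at hnn0
    rw [hc1] at hnn1
    simp only [encCfg, hstep21, hstep22]
    rw [ccR_cast]
    unfold ddR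
    by_cases hk : k = 0
    · rw [if_pos hk, hk, hc0]
      have h1 : (((C₁ : ℤ) + delZ M i C₁ C₂ 0).toNat : ℝ)
          = ((C₁ : ℤ) : ℝ) + ((delZ M i C₁ C₂ 0 : ℤ) : ℝ) := by
        rw [← Int.cast_add]
        exact_mod_cast congrArg (fun n : ℤ => (n : ℝ)) (Int.toNat_of_nonneg hnn0)
      rw [h1]
      push_cast
      ring
    · have hk1 : k = 1 := by omega
      rw [if_neg hk, hk1, hc1]
      have h1 : (((C₂ : ℤ) + delZ M i C₁ C₂ 1).toNat : ℝ)
          = ((C₂ : ℤ) : ℝ) + ((delZ M i C₁ C₂ 1 : ℤ) : ℝ) := by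
        rw [← Int.cast_add]
        exact_mod_cast congrArg (fun n : ℤ => (n : ℝ)) (Int.toNat_of_nonneg hnn1)
      rw [h1]
      push_cast
      ring
  | D k => rfl
  | E i'' b c => rfl
  | F i'' b c => rfl

theorem dynamics_interval_4' {m : ℕ} (M : CounterMachine m)
    (i0 : Fin m) (C₁0 C₂0 : ℕ) (y z : ℝ → Idx m → ℝ)
    (h : IsSkorokhodSolution (Rmat M) (fluidX i0 C₁0 C₂0) y z)
    (t : ℕ) (i : Fin m) (C₁ C₂ : ℕ)
    (htraj : (M.step)^[t] (i0, C₁0, C₂0) = (i, C₁, C₂))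
    (hz : z (5 * (t : ℝ)) = encCfg i C₁ C₂) :
    (UnitActive (fun s => y s (.A 4)) (5 * (t : ℝ) + 4) (5 * (t : ℝ) + 5)) ∧
    (∀ k : Fin 5, k ≠ 4 →
      Passive (fun s => y s (.A k)) (5 * (t : ℝ) + 4) (5 * (t : ℝ) + 5)) ∧
    (∀ j : Fin m, Passive (fun s => y s (.B j)) (5 * (t : ℝ) + 4) (5 * (t : ℝ) + 5)) ∧
    (∀ k : Fin 2, Passive (fun s => y s (.C k)) (5 * (t : ℝ) + 4) (5 * (t : ℝ) + 5)) ∧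
    (∀ k : Fin 2, Passive (fun s => y s (.D k)) (5 * (t : ℝ) + 4) (5 * (t : ℝ) + 5)) ∧
    (∀ (i'' : Fin m) (b c : Bool),
      Passive (fun s => y s (.E i'' b c)) (5 * (t : ℝ) + 4) (5 * (t : ℝ) + 5)) ∧
    (∀ (i'' : Fin m) (b c : Bool),
      Passive (fun s => y s (.F i'' b c)) (5 * (t : ℝ) + 4) (5 * (t : ℝ) + 5)) ∧
    (z (5 * (t : ℝ) + 5) =
      encCfg (M.step (i, C₁, C₂)).1 (M.step (i, C₁, C₂)).2.1
        (M.step (i, C₁, C₂)).2.2) := by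
  have hT0 : (0:ℝ) ≤ 5 * (t:ℝ) := by positivity
  have h0 : ∀ j, z (5 * (t:ℝ)) j = encCfg i C₁ C₂ j := fun j => by rw [hz]
  have h1 := phase0 h hT0 i C₁ C₂ h0
  have h2 := phase1 h (by linarith : (0:ℝ) ≤ 5 * (t:ℝ) + 1) i C₁ C₂ h1
  have h3 := phase2 h (by linarith : (0:ℝ) ≤ 5 * (t:ℝ) + 1 + 1) i C₁ C₂ h2
  have h4 := phase3 h (by linarith : (0:ℝ) ≤ 5 * (t:ℝ) + 1 + 1 + 1) i C₁ C₂ h3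
  have e4 : 5 * (t:ℝ) + 1 + 1 + 1 + 1 = 5 * (t:ℝ) + 4 := by ring
  rw [e4] at h4
  have h5 := phase4 h (by linarith : (0:ℝ) ≤ 5 * (t:ℝ) + 4) i C₁ C₂ h4
  obtain ⟨hA4, hAk, hB, hC, hD, hE, hF, hzfin⟩ := h5
  have e5 : 5 * (t:ℝ) + 4 + 1 = 5 * (t:ℝ) + 5 := by ring
  rw [e5] at hA4 hAk hB hC hD hE hF hzfin
  have hIoo : Ioo (5 * (t:ℝ) + 4) (5 * (t:ℝ) + 5) ⊆ Icc (5 * (t:ℝ) + 4) (5 * (t:ℝ) + 5) :=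
    Ioo_subset_Icc_self
  refine ⟨?_, ?_, ?_, ?_, ?_, ?_, ?_, ?_⟩
  · intro s hs
    have := hA4 s (hIoo hs)
    simpa using this
  · intro k hk s hs
    have := hAk k hk s (hIoo hs)
    linarith
  · intro j s hs
    have := hB j s (hIoo hs)
    linarith
  · intro k s hs
    have := hC k s (hIoo hs)
    linarith
  · intro k s hs
    have := hD k s (hIoo hs)
    linarith
  · intro i'' b c s hs
    have := hE i'' b c s (hIoo hs)
    linarith
  · intro i'' b c s hs
    have := hF i'' b c s (hIoo hs)
    linarith
  · funext j
    rw [hzfin j, v5_eq_enc]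

end Final

/-- Dynamics over the interval `(5t+4, 5t+5)`: `y_{A,5}` is
active at unit rate, all other `y`-coordinates are passive, and
`z(5t+5) = z^{i′,C₁+Δ₁,C₂+Δ₂}`, the encoding of the configuration of the
trajectory at time `t+1`. -/
theorem dynamics_interval_4 {m : ℕ} (M : CounterMachine m)
    (i0 : Fin m) (C₁0 C₂0 : ℕ) (y z : ℝ → Idx m → ℝ)
    (h : IsSkorokhodSolution (Rmat M) (fluidX i0 C₁0 C₂0) y z)
    (t : ℕ) (i : Fin m) (C₁ C₂ : ℕ)
    (htraj : (M.step)^[t] (i0, C₁0, C₂0) = (i, C₁, C₂))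
    (hz : z (5 * (t : ℝ)) = encCfg i C₁ C₂) :
    (UnitActive (fun s => y s (.A 4)) (5 * (t : ℝ) + 4) (5 * (t : ℝ) + 5)) ∧
    (∀ k : Fin 5, k ≠ 4 →
      Passive (fun s => y s (.A k)) (5 * (t : ℝ) + 4) (5 * (t : ℝ) + 5)) ∧
    (∀ j : Fin m, Passive (fun s => y s (.B j)) (5 * (t : ℝ) + 4) (5 * (t : ℝ) + 5)) ∧
    (∀ k : Fin 2, Passive (fun s => y s (.C k)) (5 * (t : ℝ) + 4) (5 * (t : ℝ) + 5)) ∧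
    (∀ k : Fin 2, Passive (fun s => y s (.D k)) (5 * (t : ℝ) + 4) (5 * (t : ℝ) + 5)) ∧
    (∀ (i'' : Fin m) (b c : Bool),
      Passive (fun s => y s (.E i'' b c)) (5 * (t : ℝ) + 4) (5 * (t : ℝ) + 5)) ∧
    (∀ (i'' : Fin m) (b c : Bool),
      Passive (fun s => y s (.F i'' b c)) (5 * (t : ℝ) + 4) (5 * (t : ℝ) + 5)) ∧
    (z (5 * (t : ℝ) + 5) =
      encCfg (M.step (i, C₁, C₂)).1 (M.step (i, C₁, C₂)).2.1
        (M.step (i, C₁, C₂)).2.2) :=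
  dynamics_interval_4' M i0 C₁0 C₂0 y z h t i C₁ C₂ htraj hz
end

section
/- Let Γ be a consistent counter machine with m states and i* ∈ {1,…,m} a designated halting state, and let R* be the modified reflection matrix. Let (y,z) be a Skorokhod solution for (R*, x) with x(t) = z₀ + θt (drift θ as in the construction), and suppose at some time T ≥ 0 one has z(T) = z^{i*,1,1}. Then on the interval (T, T+1) the coordinates y_{A,1} and y_{B,i*} are active at unit rate and all other y-coordinates are passive, and z(T+1) = 0 (the zero vector of ℝ^d). -/
open scoped BigOperators

section AuxHelpers

open Set Filter

/-- Generic forcing lemma: if on `[t0,t1]` we have `Z s = Y s - Y t0 - r (s - t0)`,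
with `Z ≥ 0`, `Z` continuous, and `Y` not increasing while `Z > 0`, and `r ≥ 0`,
then `Y` grows at exactly rate `r`. -/
lemma force_rate (Y Z : ℝ → ℝ) (t0 t1 r : ℝ) (ht0 : 0 ≤ t0) (hr : 0 ≤ r)
    (hZc : ContinuousOn Z (Set.Icc t0 t1))
    (hZnn : ∀ s ∈ Set.Icc t0 t1, 0 ≤ Z s)
    (hcomp : ∀ s₁ s₂ : ℝ, 0 ≤ s₁ → s₁ ≤ s₂ →
      (∀ s ∈ Set.Ioo s₁ s₂, 0 < Z s) → Y s₂ = Y s₁)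
    (hZY : ∀ s ∈ Set.Icc t0 t1, Z s = Y s - Y t0 - r * (s - t0)) :
    ∀ s ∈ Set.Icc t0 t1, Y s = Y t0 + r * (s - t0) := by
  intro s0 hs0
  have hZ0 : Z s0 = 0 := by
    rcases (hZnn s0 hs0).lt_or_eq with hpos | hpos
    swap
    · exact hpos.symm
    exfalso
    have ht01 : t0 ≤ t1 := le_trans hs0.1 hs0.2
    set K := {s : ℝ | s ∈ Set.Icc t0 s0 ∧ Z s = 0} with hK
    have ht0K : t0 ∈ K := by
      refine ⟨⟨le_rfl, hs0.1⟩, ?_⟩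
      have := hZY t0 ⟨le_rfl, ht01⟩
      rw [this]; ring
    have hKne : K.Nonempty := ⟨t0, ht0K⟩
    have hKbdd : BddAbove K := ⟨s0, fun x hx => hx.1.2⟩
    have hKcl : IsClosed K := by
      have hc : ContinuousOn Z (Set.Icc t0 s0) :=
        hZc.mono (Set.Icc_subset_Icc le_rfl hs0.2)
      have : K = Set.Icc t0 s0 ∩ Z ⁻¹' {0} := by
        ext x; simp [hK, Set.mem_Icc]
      rw [this]
      exact hc.preimage_isClosed_of_isClosed isClosed_Icc isClosed_singleton
    set w := sSup K with hw
    have hwK : w ∈ K := hKcl.csSup_mem hKne hKbdd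
    have hw0 : Z w = 0 := hwK.2
    have htw : t0 ≤ w := hwK.1.1
    have hws : w ≤ s0 := hwK.1.2
    have hwlt : w < s0 := by
      rcases hws.lt_or_eq with h | h
      · exact h
      · exfalso; rw [h] at hw0; linarith
    have hpos2 : ∀ s ∈ Set.Ioo w s0, 0 < Z s := by
      intro s hs
      have hsI : s ∈ Set.Icc t0 t1 := ⟨le_trans htw hs.1.le, le_trans hs.2.le hs0.2⟩
      rcases (hZnn s hsI).lt_or_eq with h0 | h0
      · exact h0
      · exfalso
        have : s ∈ K := ⟨⟨le_trans htw hs.1.le, hs.2.le⟩, h0.symm⟩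
        exact absurd (le_csSup hKbdd this) (not_le.2 hs.1)
    have hYeq : Y s0 = Y w := hcomp w s0 (le_trans ht0 htw) hws hpos2
    have e1 := hZY s0 hs0
    have e2 := hZY w ⟨htw, le_trans hws hs0.2⟩
    rw [hYeq] at e1
    rw [hw0] at e2
    have hr2 : 0 ≤ r * (s0 - w) := mul_nonneg hr (by linarith)
    nlinarith
  have := hZY s0 hs0
  rw [hZ0] at this
  linarith

/-- A function agreeing with an affine function on `[a,b)` and continuous from
within `[a,b)` at `b` agrees with it at `b`. -/
lemma endpoint_eq (f : ℝ → ℝ) (a b c r : ℝ) (hab : a < b)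
    (hf : ContinuousWithinAt f (Set.Ico a b) b)
    (h : ∀ s ∈ Set.Ico a b, f s = c + r * (s - a)) : f b = c + r * (b - a) := by
  have hne : (nhdsWithin b (Set.Ico a b)).NeBot := by
    rw [nhdsWithin_Ico_eq_nhdsLT hab]
    infer_instance
  have h1 : Filter.Tendsto f (nhdsWithin b (Set.Ico a b)) (nhds (f b)) := hf
  have h2 : Filter.Tendsto (fun s => c + r * (s - a)) (nhdsWithin b (Set.Ico a b))
      (nhds (c + r * (b - a))) := by
    apply Filter.Tendsto.mono_left _ nhdsWithin_le_nhds
    have : Continuous (fun s : ℝ => c + r * (s - a)) := by continuity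
    exact this.tendsto b
  have h3 : Filter.Tendsto f (nhdsWithin b (Set.Ico a b)) (nhds (c + r * (b - a))) := by
    refine h2.congr' ?_
    filter_upwards [self_mem_nhdsWithin] with s hs
    exact (h s hs).symm
  exact tendsto_nhds_unique h1 h3

end AuxHelpers

set_option maxHeartbeats 3200000 in
/-- For the modified matrix `R*`, if a Skorokhod solution for
`x(t) = z₀ + θ t` satisfies `z(T) = z^{i*,1,1}` at some time `T ≥ 0`, then on
`(T, T+1)` the coordinates `y_{A,1}` and `y_{B,i*}` are active at unit rate, all
other `y`-coordinates are passive, and `z(T+1) = 0`. -/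
theorem halting_state_empties_system {m : ℕ} (M : CounterMachine m)
    (istar : Fin m) (z0 : Idx m → ℝ) (y z : ℝ → Idx m → ℝ)
    (h : IsSkorokhodSolution (RmatStar M istar)
      (fun t p => z0 p + thetaVec m p * t) y z)
    (T : ℝ) (hT : 0 ≤ T) (hzT : z T = encCfg istar 1 1) :
    (UnitActive (fun s => y s (.A 0)) T (T + 1)) ∧
    (UnitActive (fun s => y s (.B istar)) T (T + 1)) ∧
    (∀ p : Idx m, p ≠ .A 0 → p ≠ .B istar → Passive (fun s => y s p) T (T + 1)) ∧
    z (T + 1) = 0 := by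
  obtain ⟨hyc, hzc, heq, hznn, hy0, hmono, hcomp⟩ := h
  set ev : Idx m → ℝ := encCfg istar 1 1 with hev
  have hycp : ∀ p : Idx m, ContinuousOn (fun s => y s p) (Set.Ici 0) :=
    fun p => (continuous_apply p).comp_continuousOn hyc
  have hzcp : ∀ p : Idx m, ContinuousOn (fun s => z s p) (Set.Ici 0) :=
    fun p => (continuous_apply p).comp_continuousOn hzc
  -- z decomposition between two times
  have hzdiff : ∀ t0 s : ℝ, 0 ≤ t0 → 0 ≤ s → ∀ p, z s p = z t0 p
      + thetaVec m p * (s - t0)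
      + ∑ q, RmatStar M istar p q * (y s q - y t0 q) := by
    intro t0 s h0 h1 p
    have e1 := congrFun (heq s h1) p
    have e2 := congrFun (heq t0 h0) p
    simp only [Matrix.mulVec, dotProduct, Pi.add_apply] at e1 e2
    have e3 : ∑ q, RmatStar M istar p q * (y s q - y t0 q)
        = (∑ q, RmatStar M istar p q * y s q)
          - (∑ q, RmatStar M istar p q * y t0 q) := by
      rw [← Finset.sum_sub_distrib]
      exact Finset.sum_congr rfl fun q _ => by ring
    rw [e3, e1, e2]; ring
  -- reduction of the sum to the five possibly-moving coordinates
  have hsum5 : ∀ t0 s : ℝ,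
      (∀ q : Idx m, q ≠ Idx.A 0 → q ≠ Idx.A 4 → q ≠ Idx.B istar →
        q ≠ Idx.D 0 → q ≠ Idx.D 1 → y s q = y t0 q) → ∀ p : Idx m,
      ∑ q, RmatStar M istar p q * (y s q - y t0 q)
        = RmatStar M istar p (Idx.A 0) * (y s (Idx.A 0) - y t0 (Idx.A 0))
        + RmatStar M istar p (Idx.A 4) * (y s (Idx.A 4) - y t0 (Idx.A 4))
        + RmatStar M istar p (Idx.B istar) * (y s (Idx.B istar) - y t0 (Idx.B istar))
        + RmatStar M istar p (Idx.D 0) * (y s (Idx.D 0) - y t0 (Idx.D 0))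
        + RmatStar M istar p (Idx.D 1) * (y s (Idx.D 1) - y t0 (Idx.D 1)) := by
    intro t0 s hconst p
    have hvanish : ∀ q ∈ Finset.univ,
        q ∉ ({Idx.A 0, Idx.A 4, Idx.B istar, Idx.D 0, Idx.D 1} : Finset (Idx m)) →
        RmatStar M istar p q * (y s q - y t0 q) = 0 := by
      intro q _ hq5
      simp only [Finset.mem_insert, Finset.mem_singleton] at hq5
      push_neg at hq5
      rw [hconst q hq5.1 hq5.2.1 hq5.2.2.1 hq5.2.2.2.1 hq5.2.2.2.2]
      ring
    rw [← Finset.sum_subset (Finset.subset_univ _) hvanish]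
    have d1 : (Idx.A 0 : Idx m) ∉ ({Idx.A 4, Idx.B istar, Idx.D 0, Idx.D 1} : Finset (Idx m)) := by
      simp
    have d2 : (Idx.A 4 : Idx m) ∉ ({Idx.B istar, Idx.D 0, Idx.D 1} : Finset (Idx m)) := by
      simp
    have d3 : (Idx.B istar : Idx m) ∉ ({Idx.D 0, Idx.D 1} : Finset (Idx m)) := by simp
    have d4 : (Idx.D 0 : Idx m) ∉ ({Idx.D 1} : Finset (Idx m)) := by simp
    rw [Finset.sum_insert d1, Finset.sum_insert d2, Finset.sum_insert d3,
      Finset.sum_insert d4, Finset.sum_singleton]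
    ring
  -- drift + two active columns coefficient
  have hcoef : ∀ p : Idx m, thetaVec m p + RmatStar M istar p (Idx.A 0)
      + RmatStar M istar p (Idx.B istar) = -(ev p) := by
    intro p
    rcases p with k | j | k | k | ⟨i, b, c⟩ | ⟨i, b, c⟩
    · fin_cases k <;>
        simp (config := { decide := true }) [RmatStar, Rmat, AAmat, thetaVec, hev, encCfg] <;>
        norm_num
    · by_cases hj : j = istar
      · subst hj; norm_num [RmatStar, Rmat, thetaVec, hev, encCfg]
      · norm_num [RmatStar, Rmat, thetaVec, hev, encCfg, hj, Ne.symm hj]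
    · fin_cases k <;> norm_num [RmatStar, Rmat, thetaVec, hev, encCfg]
    · fin_cases k <;>
        simp (config := { decide := true }) [RmatStar, Rmat, thetaVec, hev, encCfg] <;>
        norm_num
    · norm_num [RmatStar, Rmat, thetaVec, hev, encCfg]
    · norm_num [RmatStar, Rmat, thetaVec, hev, encCfg]
  -- "on track" predicate
  set rf : Idx m → ℝ := fun p => if p = Idx.A 0 ∨ p = Idx.B istar then 1 else 0 with hrf
  set ot : ℝ → Prop := fun s => ∀ p, y s p = y T p + rf p * (s - T) with hot
  have hrfA0 : rf (Idx.A 0) = 1 := by simp [hrf]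
  have hrfB : rf (Idx.B istar) = 1 := by simp [hrf]
  have hrfother : ∀ p, p ≠ Idx.A 0 → p ≠ Idx.B istar → rf p = 0 := by
    intro p h1 h2; simp [hrf, h1, h2]
  have hotT : ot T := by intro p; simp [hot]
  -- the z formula while on track
  have hzform : ∀ s, T ≤ s → ot s → ∀ p, z s p = ev p * (T + 1 - s) := by
    intro s hs hots p
    have hdiff := hzdiff T s hT (hT.trans hs) p
    have hc : ∀ q : Idx m, q ≠ Idx.A 0 → q ≠ Idx.A 4 → q ≠ Idx.B istar →
        q ≠ Idx.D 0 → q ≠ Idx.D 1 → y s q = y T q := by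
      intro q h1 _ h3 _ _
      rw [hots q, hrfother q h1 h3]; ring
    rw [hsum5 T s hc p] at hdiff
    have e0 := hots (Idx.A 0)
    have e1 := hots (Idx.A 4)
    have e2 := hots (Idx.B istar)
    have e3 := hots (Idx.D 0)
    have e4 := hots (Idx.D 1)
    rw [hrfA0] at e0
    rw [hrfB] at e2
    rw [hrfother _ (by simp) (by simp)] at e1
    rw [hrfother _ (by simp) (by simp)] at e3
    rw [hrfother _ (by simp) (by simp)] at e4
    rw [e0, e1, e2, e3, e4] at hdiff
    have hcf := hcoef p
    have hzTp : z T p = ev p := congrFun hzT p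
    rw [hzTp] at hdiff
    rw [hdiff]
    linear_combination (s - T) * hcf
  -- ev values
  have hevnn : ∀ p, 0 ≤ ev p := by
    intro p
    have := hznn T hT p
    rwa [congrFun hzT p] at this
  have hevne : ∀ q : Idx m, q ≠ Idx.A 0 → q ≠ Idx.A 4 → q ≠ Idx.B istar →
      q ≠ Idx.D 0 → q ≠ Idx.D 1 → ev q ≠ 0 := by
    intro q h1 h2 h3 h4 h5
    rcases q with k | j | k | k | ⟨i, b, c⟩ | ⟨i, b, c⟩
    · fin_cases k
      · exact absurd rfl h1
      · simp (config := { decide := true }) [hev, encCfg]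
      · simp (config := { decide := true }) [hev, encCfg]
      · simp (config := { decide := true }) [hev, encCfg]
      · exact absurd rfl h2
    · have hj : j ≠ istar := fun e => h3 (by rw [e])
      simp [hev, encCfg, hj]
    · fin_cases k <;> norm_num [hev, encCfg]
    · fin_cases k
      · exact absurd rfl h4
      · exact absurd rfl h5
    · norm_num [hev, encCfg]
    · norm_num [hev, encCfg]
  -- the good set
  set SS : Set ℝ := {u | u ∈ Set.Icc (0:ℝ) 1 ∧ ∀ s ∈ Set.Icc T (T + u), ot s} with hSS
  have h0S : (0:ℝ) ∈ SS := by
    refine ⟨⟨le_rfl, zero_le_one⟩, ?_⟩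
    intro s hs
    have : s = T := le_antisymm (by linarith [hs.2]) hs.1
    rw [this]; exact hotT
  have hbdd : BddAbove SS := ⟨1, fun u hu => hu.1.2⟩
  have hsne : SS.Nonempty := ⟨0, h0S⟩
  set ustar := sSup SS with hustar
  have hu0 : 0 ≤ ustar := le_csSup hbdd h0S
  have hu1 : ustar ≤ 1 := csSup_le hsne fun u hu => hu.1.2
  have hotIco : ∀ s ∈ Set.Ico T (T + ustar), ot s := by
    intro s hs
    have hlt : s - T < ustar := by linarith [hs.2]
    obtain ⟨u, huS, hu⟩ := exists_lt_of_lt_csSup hsne hlt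
    exact huS.2 s ⟨hs.1, by linarith⟩
  have hotstar : ∀ s ∈ Set.Icc T (T + ustar), ot s := by
    intro s hs
    rcases hs.2.lt_or_eq with hlt | heqs
    · exact hotIco s ⟨hs.1, hlt⟩
    · rcases hu0.lt_or_eq with h0 | h0
      · intro p
        have hcw : ContinuousWithinAt (fun t => y t p) (Set.Ico T (T + ustar)) (T + ustar) := by
          have := (hycp p) (T + ustar) (Set.mem_Ici.2 (by linarith))
          exact this.mono (fun x hx => le_trans hT hx.1)
        have hend := endpoint_eq (fun t => y t p) T (T + ustar) (y T p) (rf p)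
          (by linarith) hcw (fun u hu => hotIco u hu p)
        rw [heqs]
        simpa using hend
      · have : s = T := by rw [heqs, ← h0]; ring
        rw [this]; exact hotT
  have hustarS : ustar ∈ SS := ⟨⟨hu0, hu1⟩, hotstar⟩
  -- ustar = 1
  have husEq : ustar = 1 := by
    by_contra hne1
    have hult : ustar < 1 := lt_of_le_of_ne hu1 hne1
    set t0 := T + ustar with ht0def
    have ht0 : 0 ≤ t0 := by simp only [ht0def]; linarith
    have hott0 : ot t0 := hotstar t0 ⟨by simp only [ht0def]; linarith, le_rfl⟩
    have hzt0 : ∀ p, z t0 p = ev p * (1 - ustar) := by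
      intro p
      have := hzform t0 (by simp only [ht0def]; linarith) hott0 p
      rw [this, ht0def]; ring_nf
    have hzt0pos : ∀ p, ev p ≠ 0 → 0 < z t0 p := by
      intro p hp
      rw [hzt0 p]
      have h1 : 0 < ev p := lt_of_le_of_ne (hevnn p) (Ne.symm hp)
      have h2 : 0 < 1 - ustar := by linarith
      exact mul_pos h1 h2
    have hevent : ∀ᶠ s in nhdsWithin t0 (Set.Ici 0), ∀ p, ev p ≠ 0 → 0 < z s p := by
      rw [Filter.eventually_all]
      intro p
      by_cases hp : ev p = 0
      · filter_upwards with s hs; exact absurd hp hs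
      · have htd : Filter.Tendsto (fun s => z s p) (nhdsWithin t0 (Set.Ici 0))
            (nhds (z t0 p)) := (hzcp p) t0 (Set.mem_Ici.2 ht0)
        filter_upwards [htd.eventually (eventually_gt_nhds (hzt0pos p hp))] with s hs
        exact fun _ => hs
    have hmemfilter : {s : ℝ | ∀ p, ev p ≠ 0 → 0 < z s p} ∈ nhdsWithin t0 (Set.Ici 0) :=
      hevent
    obtain ⟨δ, hδ, hδp⟩ := Metric.mem_nhdsWithin_iff.1 hmemfilter
    set ε := min (δ / 2) (1 - ustar) with hεdef
    have hε : 0 < ε := lt_min (by linarith) (by linarith)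
    have hεle : ε ≤ 1 - ustar := min_le_right _ _
    have hJpos : ∀ s ∈ Set.Icc t0 (t0 + ε), ∀ p, ev p ≠ 0 → 0 < z s p := by
      intro s hs
      refine hδp ⟨?_, Set.mem_Ici.2 (le_trans ht0 hs.1)⟩
      rw [Metric.mem_ball, Real.dist_eq, abs_of_nonneg (by linarith [hs.1])]
      have h2 : ε ≤ δ / 2 := min_le_left _ _
      have := hs.2
      linarith
    have hconstJ : ∀ s ∈ Set.Icc t0 (t0 + ε), ∀ q, ev q ≠ 0 → y s q = y t0 q := by
      intro s hs q hq
      exact hcomp q t0 s ht0 hs.1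
        (fun u hu => hJpos u ⟨hu.1.le, le_trans hu.2.le hs.2⟩ q hq)
    have hc5 : ∀ s ∈ Set.Icc t0 (t0 + ε), ∀ q : Idx m, q ≠ Idx.A 0 → q ≠ Idx.A 4 →
        q ≠ Idx.B istar → q ≠ Idx.D 0 → q ≠ Idx.D 1 → y s q = y t0 q :=
      fun s hs q h1 h2 h3 h4 h5 => hconstJ s hs q (hevne q h1 h2 h3 h4 h5)
    have hrow : ∀ s ∈ Set.Icc t0 (t0 + ε), ∀ p, z s p = z t0 p
        + thetaVec m p * (s - t0)
        + (RmatStar M istar p (Idx.A 0) * (y s (Idx.A 0) - y t0 (Idx.A 0))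
        + RmatStar M istar p (Idx.A 4) * (y s (Idx.A 4) - y t0 (Idx.A 4))
        + RmatStar M istar p (Idx.B istar) * (y s (Idx.B istar) - y t0 (Idx.B istar))
        + RmatStar M istar p (Idx.D 0) * (y s (Idx.D 0) - y t0 (Idx.D 0))
        + RmatStar M istar p (Idx.D 1) * (y s (Idx.D 1) - y t0 (Idx.D 1))) := by
      intro s hs p
      have hd := hzdiff t0 s ht0 (le_trans ht0 hs.1) p
      rw [hsum5 t0 s (hc5 s hs) p] at hd
      linarith [hd]
    -- matrix entries
    have cA0A0 : RmatStar M istar (Idx.A 0) (Idx.A 0) = 1 := by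
      norm_num [RmatStar, Rmat, AAmat]
    have cA0A4 : RmatStar M istar (Idx.A 0) (Idx.A 4) = 0 := by
      norm_num [RmatStar, Rmat, AAmat]
      rfl
    have cA0B : RmatStar M istar (Idx.A 0) (Idx.B istar) = 0 := by
      simp (config := { decide := true }) [RmatStar, Rmat]
    have cA0D0 : RmatStar M istar (Idx.A 0) (Idx.D 0) = 0 := by
      norm_num [RmatStar, Rmat]
    have cA0D1 : RmatStar M istar (Idx.A 0) (Idx.D 1) = 0 := by
      norm_num [RmatStar, Rmat]
    have cBA0 : RmatStar M istar (Idx.B istar) (Idx.A 0) = -1 := by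
      norm_num [RmatStar, Rmat]
    have cBA4 : RmatStar M istar (Idx.B istar) (Idx.A 4) = 0 := by
      simp (config := { decide := true }) [RmatStar, Rmat]
    have cBB : RmatStar M istar (Idx.B istar) (Idx.B istar) = 1 := by
      norm_num [RmatStar, Rmat]
    have cBD0 : RmatStar M istar (Idx.B istar) (Idx.D 0) = 0 := by
      norm_num [RmatStar, Rmat]
    have cBD1 : RmatStar M istar (Idx.B istar) (Idx.D 1) = 0 := by
      norm_num [RmatStar, Rmat]
    have cA4A0 : RmatStar M istar (Idx.A 4) (Idx.A 0) = 2 := by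
      norm_num [RmatStar, Rmat, AAmat]
      rfl
    have cA4A4 : RmatStar M istar (Idx.A 4) (Idx.A 4) = 1 := by
      norm_num [RmatStar, Rmat, AAmat]
      rfl
    have cA4B : RmatStar M istar (Idx.A 4) (Idx.B istar) = -1 := by
      norm_num [RmatStar, Rmat]
    have cA4D0 : RmatStar M istar (Idx.A 4) (Idx.D 0) = 0 := by
      norm_num [RmatStar, Rmat]
    have cA4D1 : RmatStar M istar (Idx.A 4) (Idx.D 1) = 0 := by
      norm_num [RmatStar, Rmat]
    have cD0A0 : RmatStar M istar (Idx.D 0) (Idx.A 0) = 0 := by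
      simp (config := { decide := true }) [RmatStar, Rmat]
    have cD0A4 : RmatStar M istar (Idx.D 0) (Idx.A 4) = 0 := by
      simp (config := { decide := true }) [RmatStar, Rmat]
    have cD0B : RmatStar M istar (Idx.D 0) (Idx.B istar) = 0 := by
      norm_num [RmatStar, Rmat]
    have cD0D0 : RmatStar M istar (Idx.D 0) (Idx.D 0) = 1 := by
      norm_num [RmatStar, Rmat]
    have cD0D1 : RmatStar M istar (Idx.D 0) (Idx.D 1) = 0 := by
      simp (config := { decide := true }) [RmatStar, Rmat]
    have cD1A0 : RmatStar M istar (Idx.D 1) (Idx.A 0) = 0 := by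
      simp (config := { decide := true }) [RmatStar, Rmat]
    have cD1A4 : RmatStar M istar (Idx.D 1) (Idx.A 4) = 0 := by
      simp (config := { decide := true }) [RmatStar, Rmat]
    have cD1B : RmatStar M istar (Idx.D 1) (Idx.B istar) = 0 := by
      norm_num [RmatStar, Rmat]
    have cD1D0 : RmatStar M istar (Idx.D 1) (Idx.D 0) = 0 := by
      simp (config := { decide := true }) [RmatStar, Rmat]
    have cD1D1 : RmatStar M istar (Idx.D 1) (Idx.D 1) = 1 := by
      norm_num [RmatStar, Rmat]
    have hevA0 : ev (Idx.A 0) = 0 := by norm_num [hev, encCfg]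
    have hevA4 : ev (Idx.A 4) = 0 := by norm_num [hev, encCfg]
    have hevB : ev (Idx.B istar) = 0 := by norm_num [hev, encCfg]
    have hevD0 : ev (Idx.D 0) = 0 := by norm_num [hev, encCfg]
    have hevD1 : ev (Idx.D 1) = 0 := by norm_num [hev, encCfg]
    have hthA : thetaVec m (Idx.A 0) = -1 := rfl
    have hthA4 : thetaVec m (Idx.A 4) = -1 := rfl
    have hthB : thetaVec m (Idx.B istar) = 0 := rfl
    have hthD0 : thetaVec m (Idx.D 0) = 0 := rfl
    have hthD1 : thetaVec m (Idx.D 1) = 0 := rfl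
    have hzt0A0 : z t0 (Idx.A 0) = 0 := by rw [hzt0, hevA0]; ring
    have hzt0A4 : z t0 (Idx.A 4) = 0 := by rw [hzt0, hevA4]; ring
    have hzt0B : z t0 (Idx.B istar) = 0 := by rw [hzt0, hevB]; ring
    have hzt0D0 : z t0 (Idx.D 0) = 0 := by rw [hzt0, hevD0]; ring
    have hzt0D1 : z t0 (Idx.D 1) = 0 := by rw [hzt0, hevD1]; ring
    -- generic ingredients for force_rate
    have hZcJ : ∀ p : Idx m, ContinuousOn (fun s => z s p) (Set.Icc t0 (t0 + ε)) :=
      fun p => (hzcp p).mono (fun x hx => Set.mem_Ici.2 (le_trans ht0 hx.1))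
    have hZnnJ : ∀ p : Idx m, ∀ s ∈ Set.Icc t0 (t0 + ε), 0 ≤ z s p :=
      fun p s hs => hznn s (le_trans ht0 hs.1) p
    -- A0 forced at unit rate
    have hfA0 : ∀ s ∈ Set.Icc t0 (t0 + ε),
        y s (Idx.A 0) = y t0 (Idx.A 0) + 1 * (s - t0) := by
      refine force_rate _ _ t0 (t0 + ε) 1 ht0 zero_le_one (hZcJ _) (hZnnJ _)
        (fun s₁ s₂ a b c => hcomp _ s₁ s₂ a b c) ?_
      intro s hs
      have hr := hrow s hs (Idx.A 0)
      rw [cA0A0, cA0A4, cA0B, cA0D0, cA0D1, hzt0A0, hthA] at hr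
      linarith [hr]
    -- B istar forced at unit rate
    have hfB : ∀ s ∈ Set.Icc t0 (t0 + ε),
        y s (Idx.B istar) = y t0 (Idx.B istar) + 1 * (s - t0) := by
      refine force_rate _ _ t0 (t0 + ε) 1 ht0 zero_le_one (hZcJ _) (hZnnJ _)
        (fun s₁ s₂ a b c => hcomp _ s₁ s₂ a b c) ?_
      intro s hs
      have hr := hrow s hs (Idx.B istar)
      rw [cBA0, cBA4, cBB, cBD0, cBD1, hzt0B, hthB] at hr
      have h0 := hfA0 s hs
      linarith [hr]
    -- A4 passive
    have hfA4 : ∀ s ∈ Set.Icc t0 (t0 + ε),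
        y s (Idx.A 4) = y t0 (Idx.A 4) + 0 * (s - t0) := by
      refine force_rate _ _ t0 (t0 + ε) 0 ht0 le_rfl (hZcJ _) (hZnnJ _)
        (fun s₁ s₂ a b c => hcomp _ s₁ s₂ a b c) ?_
      intro s hs
      have hr := hrow s hs (Idx.A 4)
      rw [cA4A0, cA4A4, cA4B, cA4D0, cA4D1, hzt0A4, hthA4] at hr
      have h0 := hfA0 s hs
      have h1 := hfB s hs
      linarith [hr]
    -- D0, D1 passive
    have hfD0 : ∀ s ∈ Set.Icc t0 (t0 + ε),
        y s (Idx.D 0) = y t0 (Idx.D 0) + 0 * (s - t0) := by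
      refine force_rate _ _ t0 (t0 + ε) 0 ht0 le_rfl (hZcJ _) (hZnnJ _)
        (fun s₁ s₂ a b c => hcomp _ s₁ s₂ a b c) ?_
      intro s hs
      have hr := hrow s hs (Idx.D 0)
      rw [cD0A0, cD0A4, cD0B, cD0D0, cD0D1, hzt0D0, hthD0] at hr
      linarith [hr]
    have hfD1 : ∀ s ∈ Set.Icc t0 (t0 + ε),
        y s (Idx.D 1) = y t0 (Idx.D 1) + 0 * (s - t0) := by
      refine force_rate _ _ t0 (t0 + ε) 0 ht0 le_rfl (hZcJ _) (hZnnJ _)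
        (fun s₁ s₂ a b c => hcomp _ s₁ s₂ a b c) ?_
      intro s hs
      have hr := hrow s hs (Idx.D 1)
      rw [cD1A0, cD1A4, cD1B, cD1D0, cD1D1, hzt0D1, hthD1] at hr
      linarith [hr]
    -- on-track throughout J
    have hotJ : ∀ s ∈ Set.Icc t0 (t0 + ε), ot s := by
      intro s hs p
      by_cases h1 : p = Idx.A 0
      · subst h1
        rw [hrfA0, hfA0 s hs, hott0 (Idx.A 0), hrfA0]
        simp only [ht0def]; ring
      by_cases h2 : p = Idx.B istar
      · subst h2
        rw [hrfB, hfB s hs, hott0 (Idx.B istar), hrfB]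
        simp only [ht0def]; ring
      rw [hrfother p h1 h2]
      have hyt0 : y t0 p = y T p := by
        rw [hott0 p, hrfother p h1 h2]; ring
      by_cases h3 : ev p = 0
      · have hclass : p = Idx.A 4 ∨ p = Idx.D 0 ∨ p = Idx.D 1 := by
          by_contra hcon
          push_neg at hcon
          exact hevne p h1 hcon.1 h2 hcon.2.1 hcon.2.2 h3
        rcases hclass with rfl | rfl | rfl
        · rw [hfA4 s hs, hyt0]; ring
        · rw [hfD0 s hs, hyt0]; ring
        · rw [hfD1 s hs, hyt0]; ring
      · rw [hconstJ s hs p h3, hyt0]; ring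
    -- contradiction with sup
    have hmem : ustar + ε ∈ SS := by
      refine ⟨⟨by linarith, by linarith⟩, ?_⟩
      intro s hs
      by_cases hst : s ≤ t0
      · exact hotstar s ⟨hs.1, hst⟩
      · refine hotJ s ⟨le_of_not_ge hst, ?_⟩
        have := hs.2
        simp only [ht0def]
        linarith
    have := le_csSup hbdd hmem
    linarith
  -- conclusions
  have hotAll : ∀ s ∈ Set.Icc T (T + 1), ot s := by
    have := hotstar
    rw [husEq] at this
    exact this
  refine ⟨?_, ?_, ?_, ?_⟩
  · intro s hs
    have := hotAll s ⟨hs.1.le, hs.2.le⟩ (Idx.A 0)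
    rw [hrfA0] at this
    simp only []
    rw [this]; ring
  · intro s hs
    have := hotAll s ⟨hs.1.le, hs.2.le⟩ (Idx.B istar)
    rw [hrfB] at this
    simp only []
    rw [this]; ring
  · intro p h1 h2 s hs
    have := hotAll s ⟨hs.1.le, hs.2.le⟩ p
    rw [hrfother p h1 h2] at this
    simp only []
    rw [this]; ring
  · funext p
    have := hzform (T + 1) (by linarith) (hotAll (T + 1) ⟨by linarith, le_rfl⟩) p
    rw [this]
    simp
end
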